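/- arXiv:1206.3455 — 4 statements merged into one kernel-verified Lean document; each statement's English description precedes it below -/
import Mathlib

section
/- Let a₂, a₁, a₀, b₁, b₀, c₀ be real numbers and suppose there exist real numbers r₁, r₀, s₁, s₀ with b₁ = r₁s₁, b₀ = r₀s₀, s₀² + s₁² ≤ c₀, a₂ − r₁² > 0, and a₁² < 4(a₂ − r₁²)(a₀ − r₀²). Let A be the operator on S(ℝ) given by (Au)(x) = (a₂x² + a₁x + a₀ − ib₁)u(x) + 2(b₁x + b₀)(Du)(x) + c₀(D²u)(x), with D = −i d/dx. Then for every u ∈ S(ℝ) the L² inner product (Au | u) = ∫ Au(x) conj(u(x)) dx is real and satisfies (Au | u) ≥ [(4(a₀ − r₀²)(a₂ − r₁²) − a₁²)/(4(a₂ − r₁²))] · ‖u‖²_{L²}. -/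
open MeasureTheory SchwartzMap Complex Filter

noncomputable section




/-- Upgrade an `ℝ`-linear continuous map between Schwartz spaces to a `ℂ`-linear one,
given that it commutes with scalar multiplication by complex numbers. -/
def complexifyCLM {E : Type*} [NormedAddCommGroup E] [NormedSpace ℝ E]
    (T : 𝓢(E, ℂ) →L[ℝ] 𝓢(E, ℂ)) (h : ∀ (c : ℂ) (f : 𝓢(E, ℂ)), T (c • f) = c • T f) :
    𝓢(E, ℂ) →L[ℂ] 𝓢(E, ℂ) :=
  { toFun := T
    map_add' := map_add T
    map_smul' := h
    cont := T.cont }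

/-- Multiplication by a fixed function of temperate growth, as a continuous `ℂ`-linear map
on Schwartz space. -/
def mulCLM {E : Type*} [NormedAddCommGroup E] [NormedSpace ℝ E]
    {g : E → ℂ} (hg : g.HasTemperateGrowth) : 𝓢(E, ℂ) →L[ℂ] 𝓢(E, ℂ) :=
  complexifyCLM (SchwartzMap.bilinLeftCLM (ContinuousLinearMap.mul ℝ ℂ) hg)
    (fun c f => by
      ext x
      show ((c • f) x) * g x = c • (f x * g x)
      simp [mul_assoc])

lemma mulCLM_apply {E : Type*} [NormedAddCommGroup E] [NormedSpace ℝ E]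
    {g : E → ℂ} (hg : g.HasTemperateGrowth) (f : 𝓢(E, ℂ)) (x : E) :
    mulCLM hg f x = f x * g x := rfl

/-- A Schwartz function has temperate growth. -/
lemma schwartz_hasTemperateGrowth {E : Type*} [NormedAddCommGroup E] [NormedSpace ℝ E]
    (f : 𝓢(E, ℂ)) : Function.HasTemperateGrowth ⇑f := by
  refine ⟨f.smooth', fun n => ⟨0, (SchwartzMap.seminorm ℝ 0 n) f, fun x => ?_⟩⟩
  simpa using f.norm_iteratedFDeriv_le_seminorm ℝ n x

lemma hasTemperateGrowth_coord1 : Function.HasTemperateGrowth (fun v : ℝ × ℝ => (v.1 : ℂ)) :=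
  (Complex.ofRealCLM.comp (ContinuousLinearMap.fst ℝ ℝ ℝ)).hasTemperateGrowth

lemma hasTemperateGrowth_coord2 : Function.HasTemperateGrowth (fun v : ℝ × ℝ => (v.2 : ℂ)) :=
  (Complex.ofRealCLM.comp (ContinuousLinearMap.snd ℝ ℝ ℝ)).hasTemperateGrowth

lemma hasTemperateGrowth_coord : Function.HasTemperateGrowth (fun x : ℝ => (x : ℂ)) :=
  Complex.ofRealCLM.hasTemperateGrowth

/-- Tempered distributions on `ℝ`. -/
abbrev TD1 : Type := 𝓢(ℝ, ℂ) →L[ℂ] ℂ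

/-- Tempered distributions on `ℝ²`. -/
abbrev TD2 : Type := 𝓢(ℝ × ℝ, ℂ) →L[ℂ] ℂ

/-- The canonical image of a Schwartz function in the tempered distributions,
`φ ↦ (ψ ↦ ∫ φ ψ)`. -/
def toDist1 (f : 𝓢(ℝ, ℂ)) : TD1 :=
  (SchwartzMap.integralCLM ℂ (volume : Measure ℝ)).comp (mulCLM (schwartz_hasTemperateGrowth f))

/-- A tempered distribution on `ℝ` "is" a Schwartz function. -/
def IsSchwartz1 (u : TD1) : Prop := ∃ f : 𝓢(ℝ, ℂ), ∀ ψ : 𝓢(ℝ, ℂ), u ψ = ∫ x : ℝ, f x * ψ x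

/-- A tempered distribution on `ℝ²` "is" a Schwartz function. -/
def IsSchwartz2 (u : TD2) : Prop :=
  ∃ f : 𝓢(ℝ × ℝ, ℂ), ∀ ψ : 𝓢(ℝ × ℝ, ℂ), u ψ = ∫ v : ℝ × ℝ, f v * ψ v

/-- An operator on tempered distributions is regular if `B u` Schwartz implies `u` Schwartz. -/
def IsRegular1 (B : TD1 → TD1) : Prop := ∀ u : TD1, IsSchwartz1 (B u) → IsSchwartz1 u

/-- An operator on tempered distributions on `ℝ²` is regular if `B u` Schwartz implies
`u` Schwartz. -/
def IsRegular2 (B : TD2 → TD2) : Prop := ∀ u : TD2, IsSchwartz2 (B u) → IsSchwartz2 u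

/-- Multiplication by `x`, on tempered distributions on `ℝ`: `⟨xu, φ⟩ = ⟨u, xφ⟩`. -/
def opM (u : TD1) : TD1 := u.comp (mulCLM hasTemperateGrowth_coord)

/-- `D = -i d/dx` on tempered distributions on `ℝ`: `⟨Du, φ⟩ = -⟨u, Dφ⟩`. -/
def opD (u : TD1) : TD1 := Complex.I • (u.comp ((LineDeriv.lineDerivOpCLM ℂ 𝓢(ℝ, ℂ) (1 : ℝ) : 𝓢(ℝ, ℂ) →L[ℂ] 𝓢(ℝ, ℂ))))

/-- Multiplication by the first coordinate on tempered distributions on `ℝ²`. -/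
def opM1 (u : TD2) : TD2 := u.comp (mulCLM hasTemperateGrowth_coord1)

/-- Multiplication by the second coordinate on tempered distributions on `ℝ²`. -/
def opM2 (u : TD2) : TD2 := u.comp (mulCLM hasTemperateGrowth_coord2)

/-- `D₁ = -i ∂ₓ` on tempered distributions on `ℝ²`. -/
def opD1 (u : TD2) : TD2 := Complex.I • (u.comp ((LineDeriv.lineDerivOpCLM ℂ 𝓢(ℝ × ℝ, ℂ) ((1, 0) : ℝ × ℝ) :
    𝓢(ℝ × ℝ, ℂ) →L[ℂ] 𝓢(ℝ × ℝ, ℂ))))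

/-- `D₂ = -i ∂_y` on tempered distributions on `ℝ²`. -/
def opD2 (u : TD2) : TD2 := Complex.I • (u.comp ((LineDeriv.lineDerivOpCLM ℂ 𝓢(ℝ × ℝ, ℂ) ((0, 1) : ℝ × ℝ) :
    𝓢(ℝ × ℝ, ℂ) →L[ℂ] 𝓢(ℝ × ℝ, ℂ))))

/-- The set of pairs `(j, k)` of exponents with `j + k ≤ m`. -/
def idxSet (m : ℕ) : Finset (ℕ × ℕ) :=
  (Finset.range (m + 1) ×ˢ Finset.range (m + 1)).filter (fun jk => jk.1 + jk.2 ≤ m)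

/-- The polynomial symbol `a(x,ξ) = Σ_{j+k≤m} c_{jk} x^j ξ^k` as a function on `ℝ²`. -/
def symbolFun (m : ℕ) (c : ℕ → ℕ → ℂ) : ℝ × ℝ → ℂ :=
  fun v => ∑ jk ∈ idxSet m, c jk.1 jk.2 * (v.1 : ℂ) ^ jk.1 * (v.2 : ℂ) ^ jk.2

/-- A polynomial function `a(x,ξ)` on `ℝ×ℝ` is hypo-elliptic if it does not vanish outside a
compact set and `(|∂ₓ a| + |∂_ξ a|)/|a| → 0` as `|x| + |ξ| → ∞`. -/
def IsHypoelliptic (a : ℝ × ℝ → ℂ) : Prop :=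
  (∃ K : Set (ℝ × ℝ), IsCompact K ∧ ∀ v ∉ K, a v ≠ 0) ∧
    Tendsto (fun v : ℝ × ℝ => (‖fderiv ℝ a v (1, 0)‖ + ‖fderiv ℝ a v (0, 1)‖) / ‖a v‖)
      (comap (fun v : ℝ × ℝ => |v.1| + |v.2|) atTop) (nhds 0)

/-- The differential operator `A = Σ_{j+k≤m} c_{jk} M^j D^k` on tempered distributions
on `ℝ`. -/
def opA (m : ℕ) (c : ℕ → ℕ → ℂ) (u : TD1) : TD1 :=
  ∑ jk ∈ idxSet m, c jk.1 jk.2 • opM^[jk.1] (opD^[jk.2] u)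



-- function-level operators on ℝ → ℂ and ℝ × ℝ → ℂ

/-- `D = -i d/dx` acting on functions `ℝ → ℂ`. -/
def cD (u : ℝ → ℂ) : ℝ → ℂ := fun x => -Complex.I * deriv u x

/-- `D₁ = -i ∂ₓ` acting on functions `ℝ × ℝ → ℂ`. -/
def cD1 (f : ℝ × ℝ → ℂ) : ℝ × ℝ → ℂ := fun v => -Complex.I * fderiv ℝ f v (1, 0)

/-- `D₂ = -i ∂_y` acting on functions `ℝ × ℝ → ℂ`. -/
def cD2 (f : ℝ × ℝ → ℂ) : ℝ × ℝ → ℂ := fun v => -Complex.I * fderiv ℝ f v (0, 1)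

/-- The Wigner-like transform with parameter `p`:
`Wig_p[f](x,y) = (2π)^{-1/2} ∫ e^{-izy} f(x+(1-p)z, x-pz) dz`. -/
def Wig (p : ℝ) (f : ℝ × ℝ → ℂ) : ℝ × ℝ → ℂ := fun v =>
  (((2 * Real.pi) ^ (-(1/2 : ℝ)) : ℝ) : ℂ) *
    ∫ z : ℝ, Complex.exp (-(Complex.I * z * v.2)) * f (v.1 + (1 - p) * z, v.1 - p * z)

-- Weyl-Wick transform on polynomials

open MvPolynomial in
/-- `∂ₓ` on complex polynomials in two variables, as an endomorphism. -/
def pdX : Module.End ℂ (MvPolynomial (Fin 2) ℂ) := (MvPolynomial.pderiv 0).toLinearMap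

open MvPolynomial in
/-- `∂_ξ` on complex polynomials in two variables, as an endomorphism. -/
def pdXi : Module.End ℂ (MvPolynomial (Fin 2) ℂ) := (MvPolynomial.pderiv 1).toLinearMap

/-- The Laplacian `Δ = ∂ₓ² + ∂_ξ²` on complex polynomials in two variables. -/
def pLap : Module.End ℂ (MvPolynomial (Fin 2) ℂ) := pdX ^ 2 + pdXi ^ 2

/-- The Weyl-Wick transform
`W[a] = Σ_{n≥0} ((-1)^n/(4^n n!)) Δ^n Σ_{l≥0} ((-i)^l/(2^l l!)) ∂ₓ^l ∂_ξ^l a`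
(all sums are finite on polynomials). -/
def weylWick (a : MvPolynomial (Fin 2) ℂ) : MvPolynomial (Fin 2) ℂ :=
  ∑ n ∈ Finset.range (a.totalDegree + 1), (((-1 : ℂ) ^ n / (4 ^ n * n.factorial)) •
    (pLap ^ n) (∑ l ∈ Finset.range (a.totalDegree + 1),
      (((-Complex.I) ^ l / (2 ^ l * l.factorial)) • (pdX ^ l) ((pdXi ^ l) a))))

/-- The inverse Weyl-Wick transform
`W⁻¹[a] = Σ_{l≥0} (i^l/(2^l l!)) ∂ₓ^l ∂_ξ^l Σ_{n≥0} (1/(4^n n!)) Δ^n a`. -/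
def weylWickInv (a : MvPolynomial (Fin 2) ℂ) : MvPolynomial (Fin 2) ℂ :=
  ∑ l ∈ Finset.range (a.totalDegree + 1), ((Complex.I ^ l / (2 ^ l * l.factorial)) •
    (pdX ^ l) ((pdXi ^ l) (∑ n ∈ Finset.range (a.totalDegree + 1),
      ((1 / (4 ^ n * n.factorial) : ℂ) • (pLap ^ n) a))))

/-- Evaluation of a complex polynomial in two variables at a point of `ℝ²`. -/
def evalP (a : MvPolynomial (Fin 2) ℂ) (v : ℝ × ℝ) : ℂ :=
  MvPolynomial.eval ![(v.1 : ℂ), (v.2 : ℂ)] a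

/-- The polynomial `Σ_{j+k≤m} c_{jk} x^j ξ^k`. -/
def polyOf (m : ℕ) (c : ℕ → ℕ → ℂ) : MvPolynomial (Fin 2) ℂ :=
  ∑ jk ∈ (Finset.range (m + 1) ×ˢ Finset.range (m + 1)).filter (fun jk => jk.1 + jk.2 ≤ m),
    MvPolynomial.C (c jk.1 jk.2) * MvPolynomial.X 0 ^ jk.1 * MvPolynomial.X 1 ^ jk.2

/-- The coherent state `Φ_{y,η}(x) = π^{-1/4} e^{ixη} e^{-(y-x)²/2}`. -/
def coherent (y η : ℝ) : ℝ → ℂ :=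
  fun t => ((Real.pi ^ (-(1/4 : ℝ)) : ℝ) : ℂ) * Complex.exp (Complex.I * t * η) *
    ((Real.exp (-((y - t) ^ 2) / 2) : ℝ) : ℂ)

section Statement7Aux

/-- Complex conjugation of a Schwartz map. -/
def conjS (f : 𝓢(ℝ, ℂ)) : 𝓢(ℝ, ℂ) where
  toFun := fun x => (starRingEnd ℂ) (f x)
  smooth' := Complex.conjCLE.toContinuousLinearMap.contDiff.comp f.smooth'
  decay' := by
    intro k n
    obtain ⟨C, hC⟩ := f.decay' k n
    refine ⟨C, fun x => ?_⟩
    have h : (fun x : ℝ => (starRingEnd ℂ) (f x)) = ⇑Complex.conjLIE ∘ ⇑f := rfl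
    rw [h, Complex.conjLIE.norm_iteratedFDeriv_comp_left]
    exact hC x

@[simp] lemma conjS_apply (f : 𝓢(ℝ, ℂ)) (x : ℝ) : conjS f x = (starRingEnd ℂ) (f x) := rfl

/-- Pointwise product of two Schwartz maps. -/
def mulS (f g : 𝓢(ℝ, ℂ)) : 𝓢(ℝ, ℂ) := mulCLM (schwartz_hasTemperateGrowth g) f

@[simp] lemma mulS_apply (f g : 𝓢(ℝ, ℂ)) (x : ℝ) : mulS f g x = f x * g x := rfl

/-- Multiplication by the coordinate. -/
def xS (f : 𝓢(ℝ, ℂ)) : 𝓢(ℝ, ℂ) := mulCLM hasTemperateGrowth_coord f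

@[simp] lemma xS_apply (f : 𝓢(ℝ, ℂ)) (x : ℝ) : xS f x = f x * x := rfl

lemma integral_ofReal' {f : ℝ → ℝ} : ∫ x : ℝ, ((f x : ℝ) : ℂ) = ((∫ x : ℝ, f x : ℝ) : ℂ) :=
  integral_ofReal

/-- The integral over `ℝ` of the derivative of a Schwartz function vanishes. -/
lemma integral_deriv_schwartz (f : 𝓢(ℝ, ℂ)) : ∫ x : ℝ, deriv f x = 0 := by
  have hder : ∀ x : ℝ, HasDerivAt f (deriv f x) x := fun x =>
    (f.differentiableAt).hasDerivAt
  have hderiv_eq : deriv (⇑f) = ⇑(SchwartzMap.derivCLM ℂ ℂ f) := by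
    funext x; exact (SchwartzMap.derivCLM_apply ℂ f x).symm
  have hint : MeasureTheory.Integrable (fun x => deriv f x) volume := by
    rw [hderiv_eq]; exact (SchwartzMap.derivCLM ℂ ℂ f).integrable
  have htop : Tendsto f atTop (nhds 0) :=
    (zero_at_infty f).mono_left (by rw [cocompact_eq_atBot_atTop]; exact le_sup_right)
  have hbot : Tendsto f atBot (nhds 0) :=
    (zero_at_infty f).mono_left (by rw [cocompact_eq_atBot_atTop]; exact le_sup_left)
  have h1 : ∫ x in Set.Ioi (0 : ℝ), deriv f x = 0 - f 0 :=
    MeasureTheory.integral_Ioi_of_hasDerivAt_of_tendsto f.continuous.continuousWithinAt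
      (fun x _ => hder x) hint.integrableOn htop
  have h2 : ∫ x in Set.Iic (0 : ℝ), deriv f x = f 0 - 0 :=
    MeasureTheory.integral_Iic_of_hasDerivAt_of_tendsto f.continuous.continuousWithinAt
      (fun x _ => hder x) hint.integrableOn hbot
  rw [← intervalIntegral.integral_Iic_add_Ioi hint.integrableOn hint.integrableOn, h1, h2]
  ring

end Statement7Aux

set_option maxHeartbeats 1000000

/-- Under the stated conditions on the real coefficients, for the operator
`A = (a₂x² + a₁x + a₀ - ib₁) + 2(b₁x + b₀)D + c₀D²` on `S(ℝ)`, the quantity `(Au | u)_{L²}` is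
real and bounded below by `[(4(a₀-r₀²)(a₂-r₁²) - a₁²)/(4(a₂-r₁²))] ‖u‖²_{L²}`. -/
theorem statement7 (a₂ a₁ a₀ b₁ b₀ c₀ r₁ r₀ s₁ s₀ : ℝ)
    (hb₁ : b₁ = r₁ * s₁) (hb₀ : b₀ = r₀ * s₀) (hs : s₀ ^ 2 + s₁ ^ 2 ≤ c₀)
    (hr : 0 < a₂ - r₁ ^ 2) (hdisc : a₁ ^ 2 < 4 * (a₂ - r₁ ^ 2) * (a₀ - r₀ ^ 2))
    (u : 𝓢(ℝ, ℂ)) :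
    (∫ x : ℝ, (((a₂ * x ^ 2 + a₁ * x + a₀ : ℝ) : ℂ) - Complex.I * (b₁ : ℂ)) * u x
        * (starRingEnd ℂ) (u x)
      + 2 * ((b₁ * x + b₀ : ℝ) : ℂ) * cD (⇑u) x * (starRingEnd ℂ) (u x)
      + (c₀ : ℂ) * cD (cD ⇑u) x * (starRingEnd ℂ) (u x)).im = 0 ∧
    ((4 * (a₀ - r₀ ^ 2) * (a₂ - r₁ ^ 2) - a₁ ^ 2) / (4 * (a₂ - r₁ ^ 2))) * (∫ x : ℝ, ‖u x‖ ^ 2)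
      ≤ (∫ x : ℝ, (((a₂ * x ^ 2 + a₁ * x + a₀ : ℝ) : ℂ) - Complex.I * (b₁ : ℂ)) * u x
          * (starRingEnd ℂ) (u x)
        + 2 * ((b₁ * x + b₀ : ℝ) : ℂ) * cD (⇑u) x * (starRingEnd ℂ) (u x)
        + (c₀ : ℂ) * cD (cD ⇑u) x * (starRingEnd ℂ) (u x)).re := by
  subst hb₁ hb₀
  -- notation
  set u1 : 𝓢(ℝ, ℂ) := SchwartzMap.derivCLM ℂ ℂ u with hu1def
  set u2 : 𝓢(ℝ, ℂ) := SchwartzMap.derivCLM ℂ ℂ u1 with hu2def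
  have hu1x : ∀ x, u1 x = deriv u x := fun x => SchwartzMap.derivCLM_apply ℂ u x
  have hu2x : ∀ x, u2 x = deriv (⇑u1) x := fun x => SchwartzMap.derivCLM_apply ℂ u1 x
  have hud : Differentiable ℝ ⇑u := u.differentiable
  have hu1d : Differentiable ℝ ⇑u1 := u1.differentiable
  have hcd : ∀ x, cD (⇑u) x = -Complex.I * u1 x := by
    intro x; simp [cD, hu1x]
  have hcd2 : ∀ x, cD (cD ⇑u) x = -(u2 x) := by
    intro x
    have hder : deriv (⇑u) = ⇑u1 := funext fun y => (hu1x y).symm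
    have h1 : cD (⇑u) = fun y => -Complex.I * u1 y := by
      funext y; simp [cD, hder]
    rw [cD, h1, deriv_const_mul _ (hu1d x), ← hu2x]
    have : -Complex.I * (-Complex.I * u2 x) = (Complex.I * Complex.I) * u2 x := by ring
    rw [this, Complex.I_mul_I]; ring
  -- the sum-of-squares pieces
  set P : 𝓢(ℝ, ℂ) := (r₁ : ℂ) • xS u + (-(Complex.I * (s₁ : ℂ))) • u1 with hPdef
  set Q : 𝓢(ℝ, ℂ) := (r₀ : ℂ) • u + (-(Complex.I * (s₀ : ℂ))) • u1 with hQdef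
  set m0 : 𝓢(ℝ, ℂ) := mulS u (conjS u) with hm0def
  set G : 𝓢(ℝ, ℂ) := (-(c₀ : ℂ)) • mulS u1 (conjS u) + (-(Complex.I * (r₁ * s₁ : ℝ))) • xS m0
      + (-(Complex.I * (r₀ * s₀ : ℝ))) • m0 with hGdef
  set F1 : 𝓢(ℝ, ℂ) := mulS P (conjS P) with hF1def
  set F2 : 𝓢(ℝ, ℂ) := mulS Q (conjS Q) with hF2def
  set F3 : 𝓢(ℝ, ℂ) := ((a₂ - r₁ ^ 2 : ℝ) : ℂ) • xS (xS m0) + (a₁ : ℂ) • xS m0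
      + ((a₀ - r₀ ^ 2 : ℝ) : ℂ) • m0 with hF3def
  set F4 : 𝓢(ℝ, ℂ) := ((c₀ - s₀ ^ 2 - s₁ ^ 2 : ℝ) : ℂ) • mulS u1 (conjS u1) with hF4def
  -- derivative of G
  have hGderiv : ∀ x : ℝ, deriv (⇑G) x =
      (-(c₀ : ℂ)) * (u2 x * (starRingEnd ℂ) (u x) + u1 x * (starRingEnd ℂ) (u1 x))
      + (-(Complex.I * (r₁ * s₁ : ℝ))) *
          ((u1 x * (starRingEnd ℂ) (u x) + u x * (starRingEnd ℂ) (u1 x)) * x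
            + (u x * (starRingEnd ℂ) (u x)) * 1)
      + (-(Complex.I * (r₀ * s₀ : ℝ))) *
          (u1 x * (starRingEnd ℂ) (u x) + u x * (starRingEnd ℂ) (u1 x)) := by
    intro x
    have hu : HasDerivAt (⇑u) (u1 x) x := by
      rw [hu1x]; exact (hud x).hasDerivAt
    have hu1' : HasDerivAt (⇑u1) (u2 x) x := by
      rw [hu2x]; exact (hu1d x).hasDerivAt
    have hconj : HasDerivAt (fun y => (starRingEnd ℂ) (u y)) ((starRingEnd ℂ) (u1 x)) x :=
      (Complex.conjCLE.toContinuousLinearMap.hasFDerivAt).comp_hasDerivAt x hu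
    have hconj1 : HasDerivAt (fun y => (starRingEnd ℂ) (u1 y)) ((starRingEnd ℂ) (u2 x)) x :=
      (Complex.conjCLE.toContinuousLinearMap.hasFDerivAt).comp_hasDerivAt x hu1'
    have hxc : HasDerivAt (fun y : ℝ => (y : ℂ)) 1 x := by
      simpa using (hasDerivAt_id x).ofReal_comp
    have hGfun : ⇑G = fun y =>
        (-(c₀ : ℂ)) * (u1 y * (starRingEnd ℂ) (u y))
        + (-(Complex.I * (r₁ * s₁ : ℝ))) * ((u y * (starRingEnd ℂ) (u y)) * y)
        + (-(Complex.I * (r₀ * s₀ : ℝ))) * (u y * (starRingEnd ℂ) (u y)) := by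
      funext y
      simp only [hGdef, hm0def, SchwartzMap.add_apply, SchwartzMap.smul_apply, smul_eq_mul, mulS_apply,
        conjS_apply, xS_apply, Complex.ofReal_mul]
    rw [hGfun]
    exact ((((hu1'.mul hconj).const_mul _).add
        ((((hu.mul hconj).mul hxc)).const_mul _)).add
        ((hu.mul hconj).const_mul _)).deriv
  -- pointwise sum-of-squares identity
  have hpt : ∀ x : ℝ,
      (((a₂ * x ^ 2 + a₁ * x + a₀ : ℝ) : ℂ) - Complex.I * ((r₁ * s₁ : ℝ) : ℂ)) * u x
          * (starRingEnd ℂ) (u x)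
        + 2 * ((r₁ * s₁ * x + r₀ * s₀ : ℝ) : ℂ) * cD (⇑u) x * (starRingEnd ℂ) (u x)
        + (c₀ : ℂ) * cD (cD ⇑u) x * (starRingEnd ℂ) (u x)
      = F1 x + F2 x + F3 x + F4 x + (SchwartzMap.derivCLM ℂ ℂ G) x := by
    intro x
    rw [hcd x, hcd2 x, SchwartzMap.derivCLM_apply ℂ G x, hGderiv x]
    simp only [hF1def, hF2def, hF3def, hF4def, hPdef, hQdef, hm0def, mulS_apply, conjS_apply,
      xS_apply, SchwartzMap.add_apply, SchwartzMap.smul_apply, smul_eq_mul, map_add, map_mul,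
      map_neg, Complex.conj_I, Complex.conj_ofReal, Complex.ofReal_mul, Complex.ofReal_add,
      Complex.ofReal_sub, Complex.ofReal_pow]
    push_cast
    ring_nf
    simp only [Complex.I_sq]
    ring
  -- pointwise real forms
  have p1 : ∀ x : ℝ, F1 x = ((‖P x‖ ^ 2 : ℝ) : ℂ) := by
    intro x
    rw [hF1def]
    simp only [mulS_apply, conjS_apply, Complex.mul_conj]
    simp [Complex.normSq_eq_norm_sq]
  have p2 : ∀ x : ℝ, F2 x = ((‖Q x‖ ^ 2 : ℝ) : ℂ) := by
    intro x
    rw [hF2def]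
    simp only [mulS_apply, conjS_apply, Complex.mul_conj]
    simp [Complex.normSq_eq_norm_sq]
  have p3 : ∀ x : ℝ, F3 x =
      ((((a₂ - r₁ ^ 2) * x ^ 2 + a₁ * x + (a₀ - r₀ ^ 2)) * ‖u x‖ ^ 2 : ℝ) : ℂ) := by
    intro x
    simp only [hF3def, hm0def, SchwartzMap.add_apply, SchwartzMap.smul_apply, smul_eq_mul,
      mulS_apply, conjS_apply, xS_apply, Complex.mul_conj]
    simp only [Complex.normSq_eq_norm_sq]
    push_cast
    ring
  have p4 : ∀ x : ℝ, F4 x = (((c₀ - s₀ ^ 2 - s₁ ^ 2) * ‖u1 x‖ ^ 2 : ℝ) : ℂ) := by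
    intro x
    simp only [hF4def, SchwartzMap.smul_apply, smul_eq_mul, mulS_apply, conjS_apply,
      Complex.mul_conj]
    simp only [Complex.normSq_eq_norm_sq]
    push_cast
    ring
  -- integrability
  have hI1 : MeasureTheory.Integrable (fun x : ℝ => F1 x) volume := F1.integrable
  have hI2 : MeasureTheory.Integrable (fun x : ℝ => F2 x) volume := F2.integrable
  have hI3 : MeasureTheory.Integrable (fun x : ℝ => F3 x) volume := F3.integrable
  have hI4 : MeasureTheory.Integrable (fun x : ℝ => F4 x) volume := F4.integrable
  have hI12 : MeasureTheory.Integrable (fun x : ℝ => F1 x + F2 x) volume := hI1.add hI2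
  have hI123 : MeasureTheory.Integrable (fun x : ℝ => F1 x + F2 x + F3 x) volume := hI12.add hI3
  have hI1234 : MeasureTheory.Integrable (fun x : ℝ => F1 x + F2 x + F3 x + F4 x) volume :=
    hI123.add hI4
  have hIG : MeasureTheory.Integrable (fun x : ℝ => (SchwartzMap.derivCLM ℂ ℂ G) x) volume :=
    (SchwartzMap.derivCLM ℂ ℂ G).integrable
  -- the main integral identity
  have key : (∫ x : ℝ, (((a₂ * x ^ 2 + a₁ * x + a₀ : ℝ) : ℂ) - Complex.I * ((r₁ * s₁ : ℝ) : ℂ))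
          * u x * (starRingEnd ℂ) (u x)
        + 2 * ((r₁ * s₁ * x + r₀ * s₀ : ℝ) : ℂ) * cD (⇑u) x * (starRingEnd ℂ) (u x)
        + (c₀ : ℂ) * cD (cD ⇑u) x * (starRingEnd ℂ) (u x))
      = (((∫ x : ℝ, ‖P x‖ ^ 2) + (∫ x : ℝ, ‖Q x‖ ^ 2)
          + (∫ x : ℝ, ((a₂ - r₁ ^ 2) * x ^ 2 + a₁ * x + (a₀ - r₀ ^ 2)) * ‖u x‖ ^ 2)
          + (∫ x : ℝ, (c₀ - s₀ ^ 2 - s₁ ^ 2) * ‖u1 x‖ ^ 2) : ℝ) : ℂ) := by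
    rw [MeasureTheory.integral_congr_ae (Filter.Eventually.of_forall hpt)]
    rw [MeasureTheory.integral_add hI1234 hIG, MeasureTheory.integral_add hI123 hI4,
      MeasureTheory.integral_add hI12 hI3, MeasureTheory.integral_add hI1 hI2]
    have hG0 : (∫ x : ℝ, (SchwartzMap.derivCLM ℂ ℂ G) x) = 0 := by
      rw [show (fun x : ℝ => (SchwartzMap.derivCLM ℂ ℂ G) x) = fun x : ℝ => deriv (⇑G) x from
        funext fun x => SchwartzMap.derivCLM_apply ℂ G x]
      exact integral_deriv_schwartz G
    rw [hG0, add_zero]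
    rw [MeasureTheory.integral_congr_ae (Filter.Eventually.of_forall p1),
      MeasureTheory.integral_congr_ae (Filter.Eventually.of_forall p2),
      MeasureTheory.integral_congr_ae (Filter.Eventually.of_forall p3),
      MeasureTheory.integral_congr_ae (Filter.Eventually.of_forall p4),
      integral_ofReal', integral_ofReal', integral_ofReal', integral_ofReal']
    norm_cast
  refine ⟨by rw [key]; exact Complex.ofReal_im _, ?_⟩
  rw [key, Complex.ofReal_re]
  -- real estimates
  have hα : (0 : ℝ) < 4 * (a₂ - r₁ ^ 2) := by linarith
  have hq : ∀ x : ℝ, (4 * (a₀ - r₀ ^ 2) * (a₂ - r₁ ^ 2) - a₁ ^ 2) / (4 * (a₂ - r₁ ^ 2))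
      ≤ (a₂ - r₁ ^ 2) * x ^ 2 + a₁ * x + (a₀ - r₀ ^ 2) := by
    intro x
    rw [div_le_iff₀ hα]
    nlinarith [sq_nonneg (2 * (a₂ - r₁ ^ 2) * x + a₁)]
  have hintu2 : MeasureTheory.Integrable (fun x : ℝ => ‖u x‖ ^ 2) volume := by
    refine (m0.integrable.re).congr (Filter.Eventually.of_forall fun x => ?_)
    show RCLike.re (m0 x) = _
    have hx : m0 x = ((‖u x‖ ^ 2 : ℝ) : ℂ) := by
      rw [hm0def]
      simp only [mulS_apply, conjS_apply, Complex.mul_conj, Complex.normSq_eq_norm_sq]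
    rw [hx]
    exact Complex.ofReal_re _
  have hint3 : MeasureTheory.Integrable
      (fun x : ℝ => ((a₂ - r₁ ^ 2) * x ^ 2 + a₁ * x + (a₀ - r₀ ^ 2)) * ‖u x‖ ^ 2) volume := by
    refine (hI3.re).congr (Filter.Eventually.of_forall fun x => ?_)
    show RCLike.re (F3 x) = _
    rw [p3 x]
    exact Complex.ofReal_re _
  have h1 : (0 : ℝ) ≤ ∫ x : ℝ, ‖P x‖ ^ 2 :=
    MeasureTheory.integral_nonneg fun x => by positivity
  have h2 : (0 : ℝ) ≤ ∫ x : ℝ, ‖Q x‖ ^ 2 :=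
    MeasureTheory.integral_nonneg fun x => by positivity
  have h4 : (0 : ℝ) ≤ ∫ x : ℝ, (c₀ - s₀ ^ 2 - s₁ ^ 2) * ‖u1 x‖ ^ 2 := by
    refine MeasureTheory.integral_nonneg fun x => ?_
    have hc : (0 : ℝ) ≤ c₀ - s₀ ^ 2 - s₁ ^ 2 := by linarith
    positivity
  have h3 : (4 * (a₀ - r₀ ^ 2) * (a₂ - r₁ ^ 2) - a₁ ^ 2) / (4 * (a₂ - r₁ ^ 2))
      * (∫ x : ℝ, ‖u x‖ ^ 2)
      ≤ ∫ x : ℝ, ((a₂ - r₁ ^ 2) * x ^ 2 + a₁ * x + (a₀ - r₀ ^ 2)) * ‖u x‖ ^ 2 := by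
    rw [← MeasureTheory.integral_const_mul]
    refine MeasureTheory.integral_mono (hintu2.const_mul _) hint3 fun x => ?_
    exact mul_le_mul_of_nonneg_right (hq x) (by positivity)
  linarith

end
end

section
/- The Weyl-Wick transform W maps polynomials of total degree m to polynomials of total degree m and is a linear bijection of the space of complex polynomials in two variables onto itself; its inverse is given by W⁻¹[a] = Σ_{l≥0} (i^l/(2^l l!)) ∂ₓ^l ∂ξ^l Σ_{n≥0} (1/(4^n n!)) Δ^n a, i.e., W⁻¹[W[a]] = a and W[W⁻¹[a]] = a for every polynomial a. -/
open MeasureTheory SchwartzMap Complex Filter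

noncomputable section




section WWaux
open MvPolynomial Finset

private lemma ww_sum_fin2 (s : Fin 2 →₀ ℕ) : (s.sum fun _ e => e) = s 0 + s 1 := by
  rw [Finsupp.sum_fintype _ _ (fun _ => rfl), Fin.sum_univ_two]

private lemma ww_desc (n k : ℕ) : n.descFactorial (k+1) = n * (n-1).descFactorial k := by
  cases n with
  | zero => simp
  | succ n => rw [Nat.succ_descFactorial_succ]; simp

private lemma ww_pd_pow_monomial (i : Fin 2) (k : ℕ) (s : Fin 2 →₀ ℕ) (c : ℂ) :
    (((pderiv i).toLinearMap : Module.End ℂ (MvPolynomial (Fin 2) ℂ)) ^ k) (monomial s c)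
      = monomial (s - Finsupp.single i k) (c * ((s i).descFactorial k : ℕ)) := by
  induction k generalizing s c with
  | zero => simp
  | succ k ih =>
    rw [pow_succ, Module.End.mul_apply]
    have h1 : ((pderiv i).toLinearMap : Module.End ℂ (MvPolynomial (Fin 2) ℂ)) (monomial s c)
        = monomial (s - Finsupp.single i 1) (c * s i) := by
      simp [pderiv_monomial]
    rw [h1, ih]
    have h2 : s - Finsupp.single i 1 - Finsupp.single i k = s - Finsupp.single i (k+1) := by
      rw [tsub_tsub, ← Finsupp.single_add, add_comm]
    rw [h2]
    simp only [Finsupp.tsub_apply, Finsupp.single_eq_same]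
    congr 1
    rw [ww_desc]
    push_cast
    ring

private lemma ww_pdpow_monomial (j k : ℕ) (s : Fin 2 →₀ ℕ) (c : ℂ) :
    (pdX ^ j) ((pdXi ^ k) (monomial s c))
      = monomial (s - Finsupp.single 1 k - Finsupp.single 0 j)
          (c * ((s 1).descFactorial k : ℕ) * ((s 0).descFactorial j : ℕ)) := by
  rw [pdXi, ww_pd_pow_monomial, pdX, ww_pd_pow_monomial]
  have h0 : ((s - Finsupp.single 1 k : Fin 2 →₀ ℕ)) 0 = s 0 := by
    rw [Finsupp.tsub_apply, Finsupp.single_eq_of_ne (by decide), Nat.sub_zero]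
  rw [h0, mul_assoc]

private lemma ww_CL {j k : ℕ} {a : MvPolynomial (Fin 2) ℂ} (h : a.totalDegree < j + k) :
    (pdX ^ j) ((pdXi ^ k) a) = 0 := by
  conv_lhs => rw [← support_sum_monomial_coeff a]
  rw [map_sum, map_sum]
  refine Finset.sum_eq_zero fun s hs => ?_
  rw [ww_pdpow_monomial]
  have hd : s 0 + s 1 ≤ a.totalDegree := by rw [← ww_sum_fin2]; exact le_totalDegree hs
  have h' : s 0 < j ∨ s 1 < k := by omega
  rcases h' with h' | h'
  · rw [Nat.descFactorial_eq_zero_iff_lt.mpr h']; simp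
  · rw [Nat.descFactorial_eq_zero_iff_lt.mpr h']; simp

private lemma ww_degCL (j k : ℕ) (a : MvPolynomial (Fin 2) ℂ) :
    ((pdX ^ j) ((pdXi ^ k) a)).totalDegree ≤ a.totalDegree := by
  conv_lhs => rw [← support_sum_monomial_coeff a]
  rw [map_sum, map_sum]
  refine totalDegree_finsetSum_le fun s hs => ?_
  rw [ww_pdpow_monomial]
  refine (totalDegree_monomial_le _ _).trans ?_
  have h1 : (s.sum fun _ e => e) ≤ a.totalDegree := le_totalDegree hs
  rw [ww_sum_fin2] at h1
  show ((s - Finsupp.single 1 k - Finsupp.single 0 j).sum fun _ e => e) ≤ a.totalDegree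
  rw [ww_sum_fin2]
  simp only [Finsupp.tsub_apply, Finsupp.single_eq_same,
    Finsupp.single_eq_of_ne (show (1 : Fin 2) ≠ 0 by decide),
    Finsupp.single_eq_of_ne (show (0 : Fin 2) ≠ 1 by decide)]
  omega

private lemma ww_commute : Commute pdX pdXi := by
  refine LinearMap.ext fun p => ?_
  simp only [Module.End.mul_apply]
  rw [← support_sum_monomial_coeff p]
  rw [map_sum, map_sum, map_sum, map_sum]
  refine Finset.sum_congr rfl fun s _ => ?_
  show (pdX ^ 1) ((pdXi ^ 1) (monomial s (coeff s p))) = (pdXi ^ 1) ((pdX ^ 1) (monomial s (coeff s p)))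
  rw [ww_pdpow_monomial, pdX, pdXi, ww_pd_pow_monomial, ww_pd_pow_monomial]
  have h0 : ((s - Finsupp.single 0 1 : Fin 2 →₀ ℕ)) 1 = s 1 := by
    rw [Finsupp.tsub_apply, Finsupp.single_eq_of_ne (by decide), Nat.sub_zero]
  rw [h0, tsub_tsub, tsub_tsub, add_comm (Finsupp.single 1 1)]
  ring_nf

private lemma ww_lap_pow (n : ℕ) (b : MvPolynomial (Fin 2) ℂ) :
    (pLap ^ n) b = ∑ k ∈ Finset.range (n+1),
      ((n.choose k : ℕ) : ℂ) • (pdX ^ (2*k)) ((pdXi ^ (2*(n-k))) b) := by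
  have hc : Commute (pdX ^ 2) (pdXi ^ 2) := ww_commute.pow_pow 2 2
  rw [show pLap = pdX ^ 2 + pdXi ^ 2 from rfl, hc.add_pow, LinearMap.sum_apply]
  refine Finset.sum_congr rfl fun k _ => ?_
  rw [Module.End.mul_apply, Module.End.natCast_apply, map_nsmul, pow_mul, pow_mul,
    Module.End.mul_apply, Nat.cast_smul_eq_nsmul]

private lemma ww_lap_zero {n : ℕ} {b : MvPolynomial (Fin 2) ℂ} (h : b.totalDegree < n) :
    (pLap ^ n) b = 0 := by
  rw [ww_lap_pow]
  refine Finset.sum_eq_zero fun k hk => ?_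
  have hk' : k ≤ n := by have := Finset.mem_range.mp hk; omega
  rw [ww_CL (by omega), smul_zero]

private lemma ww_lap_deg (n : ℕ) (b : MvPolynomial (Fin 2) ℂ) :
    ((pLap ^ n) b).totalDegree ≤ b.totalDegree := by
  rw [ww_lap_pow]
  exact totalDegree_finsetSum_le fun k _ =>
    (totalDegree_smul_le _ _).trans (ww_degCL _ _ _)

private def gA (g : ℕ → ℂ) (N : ℕ) (a : MvPolynomial (Fin 2) ℂ) : MvPolynomial (Fin 2) ℂ :=
  ∑ l ∈ Finset.range (N+1), g l • (pdX ^ l) ((pdXi ^ l) a)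

private def gB (g : ℕ → ℂ) (N : ℕ) (a : MvPolynomial (Fin 2) ℂ) : MvPolynomial (Fin 2) ℂ :=
  ∑ n ∈ Finset.range (N+1), g n • (pLap ^ n) a

private lemma ga_deg (g : ℕ → ℂ) (N : ℕ) (a : MvPolynomial (Fin 2) ℂ) :
    (gA g N a).totalDegree ≤ a.totalDegree :=
  totalDegree_finsetSum_le fun l _ => (totalDegree_smul_le _ _).trans (ww_degCL _ _ _)

private lemma gb_deg (g : ℕ → ℂ) (N : ℕ) (a : MvPolynomial (Fin 2) ℂ) :
    (gB g N a).totalDegree ≤ a.totalDegree :=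
  totalDegree_finsetSum_le fun n _ => (totalDegree_smul_le _ _).trans (ww_lap_deg _ _)

private lemma ga_ext (g : ℕ → ℂ) {N M : ℕ} {a : MvPolynomial (Fin 2) ℂ}
    (h : a.totalDegree ≤ N) (hNM : N ≤ M) : gA g N a = gA g M a := by
  refine Finset.sum_subset (Finset.range_subset_range.mpr (by omega)) fun l _ hl => ?_
  have hl' : N < l := by
    have := Finset.mem_range.not.mp hl; omega
  rw [ww_CL (by omega), smul_zero]

private lemma gb_ext (g : ℕ → ℂ) {N M : ℕ} {a : MvPolynomial (Fin 2) ℂ}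
    (h : a.totalDegree ≤ N) (hNM : N ≤ M) : gB g N a = gB g M a := by
  refine Finset.sum_subset (Finset.range_subset_range.mpr (by omega)) fun n _ hn => ?_
  have hn' : N < n := by
    have := Finset.mem_range.not.mp hn; omega
  rw [ww_lap_zero (by omega), smul_zero]

private lemma ga_stab (g : ℕ → ℂ) {N M : ℕ} {a : MvPolynomial (Fin 2) ℂ}
    (h1 : a.totalDegree ≤ N) (h2 : a.totalDegree ≤ M) : gA g N a = gA g M a := by
  rcases le_total N M with h | h
  · exact ga_ext g h1 h
  · exact (ga_ext g h2 h).symm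

private lemma gb_stab (g : ℕ → ℂ) {N M : ℕ} {a : MvPolynomial (Fin 2) ℂ}
    (h1 : a.totalDegree ≤ N) (h2 : a.totalDegree ≤ M) : gB g N a = gB g M a := by
  rcases le_total N M with h | h
  · exact gb_ext g h1 h
  · exact (gb_ext g h2 h).symm

private lemma ga_add (g : ℕ → ℂ) (N : ℕ) (a b : MvPolynomial (Fin 2) ℂ) :
    gA g N (a + b) = gA g N a + gA g N b := by
  simp [gA, map_add, smul_add, Finset.sum_add_distrib]

private lemma gb_add (g : ℕ → ℂ) (N : ℕ) (a b : MvPolynomial (Fin 2) ℂ) :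
    gB g N (a + b) = gB g N a + gB g N b := by
  simp [gB, map_add, smul_add, Finset.sum_add_distrib]

private lemma ga_smul (g : ℕ → ℂ) (N : ℕ) (c : ℂ) (a : MvPolynomial (Fin 2) ℂ) :
    gA g N (c • a) = c • gA g N a := by
  simp only [gA, _root_.map_smul, Finset.smul_sum]
  exact Finset.sum_congr rfl fun l _ => smul_comm _ _ _

private lemma gb_smul (g : ℕ → ℂ) (N : ℕ) (c : ℂ) (a : MvPolynomial (Fin 2) ℂ) :
    gB g N (c • a) = c • gB g N a := by
  simp only [gB, _root_.map_smul, Finset.smul_sum]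
  exact Finset.sum_congr rfl fun l _ => smul_comm _ _ _

private def EA (g : ℕ → ℂ) (N : ℕ) : Module.End ℂ (MvPolynomial (Fin 2) ℂ) :=
  ∑ l ∈ Finset.range (N+1), g l • (pdX * pdXi) ^ l

private def EB (g : ℕ → ℂ) (N : ℕ) : Module.End ℂ (MvPolynomial (Fin 2) ℂ) :=
  ∑ n ∈ Finset.range (N+1), g n • pLap ^ n

private lemma ga_eq (g : ℕ → ℂ) (N : ℕ) (a : MvPolynomial (Fin 2) ℂ) :
    gA g N a = EA g N a := by
  rw [EA, LinearMap.sum_apply]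
  refine Finset.sum_congr rfl fun l _ => ?_
  rw [LinearMap.smul_apply, ww_commute.mul_pow, Module.End.mul_apply]

private lemma gb_eq (g : ℕ → ℂ) (N : ℕ) (a : MvPolynomial (Fin 2) ℂ) :
    gB g N a = EB g N a := by
  rw [EB, LinearMap.sum_apply]
  exact Finset.sum_congr rfl fun n _ => by rw [LinearMap.smul_apply]

private lemma ww_commAB : Commute (pdX * pdXi) pLap := by
  have h1 : Commute (pdX * pdXi) (pdX ^ 2) :=
    ((Commute.refl pdX).mul_left ww_commute.symm).pow_right 2
  have h2 : Commute (pdX * pdXi) (pdXi ^ 2) :=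
    ((ww_commute.mul_left (Commute.refl pdXi)).pow_right 2)
  exact h1.add_right h2

private lemma ww_commEAEB (g g' : ℕ → ℂ) (N M : ℕ) : Commute (EA g N) (EB g' M) := by
  refine Commute.sum_left _ _ _ fun l _ => Commute.sum_right _ _ _ fun n _ => ?_
  exact ((ww_commAB.pow_pow l n).smul_left _).smul_right _

private lemma ww_swapBBA (g1 g2 g3 : ℕ → ℂ) (N : ℕ) (x : MvPolynomial (Fin 2) ℂ) :
    gB g1 N (gB g2 N (gA g3 N x)) = gA g3 N (gB g1 N (gB g2 N x)) := by
  simp only [ga_eq, gb_eq]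
  have hc : Commute (EB g1 N * EB g2 N) (EA g3 N) :=
    ((ww_commEAEB g3 g1 N N).symm.mul_left (ww_commEAEB g3 g2 N N).symm)
  calc EB g1 N (EB g2 N (EA g3 N x)) = ((EB g1 N * EB g2 N) * EA g3 N) x := rfl
    _ = (EA g3 N * (EB g1 N * EB g2 N)) x := by rw [hc.eq]
    _ = EA g3 N (EB g1 N (EB g2 N x)) := rfl

private lemma ww_swapAAB (g1 g2 g3 : ℕ → ℂ) (N : ℕ) (x : MvPolynomial (Fin 2) ℂ) :
    gA g1 N (gA g2 N (gB g3 N x)) = gB g3 N (gA g1 N (gA g2 N x)) := by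
  simp only [ga_eq, gb_eq]
  have hc : Commute (EA g1 N * EA g2 N) (EB g3 N) :=
    ((ww_commEAEB g1 g3 N N).mul_left (ww_commEAEB g2 g3 N N))
  calc EA g1 N (EA g2 N (EB g3 N x)) = ((EA g1 N * EA g2 N) * EB g3 N) x := rfl
    _ = (EB g3 N * (EA g1 N * EA g2 N)) x := by rw [hc.eq]
    _ = EB g3 N (EA g1 N (EA g2 N x)) := rfl

private lemma ww_delta (z w : ℂ) (hw : w ≠ 0) (p : ℕ) :
    ∑ n ∈ Finset.range (p+1),
      (z ^ n / (w ^ n * n.factorial)) * ((-z) ^ (p-n) / (w ^ (p-n) * (p-n).factorial))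
      = if p = 0 then 1 else 0 := by
  have h1 : ∀ n ∈ Finset.range (p+1),
      (z ^ n / (w ^ n * n.factorial)) * ((-z) ^ (p-n) / (w ^ (p-n) * (p-n).factorial))
        = (z ^ n * (-z) ^ (p-n) * (p.choose n : ℕ)) / (w ^ p * p.factorial) := by
    intro n hn
    have hn' : n ≤ p := by have := Finset.mem_range.mp hn; omega
    have hfact : ((p.factorial : ℂ)) = (p.choose n : ℕ) * ((n.factorial : ℕ) * ((p-n).factorial : ℕ)) := by
      rw [← Nat.choose_mul_factorial_mul_factorial hn']
      push_cast
      ring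
    have hf1 : ((n.factorial : ℂ)) ≠ 0 := Nat.cast_ne_zero.mpr n.factorial_ne_zero
    have hf2 : (((p-n).factorial : ℂ)) ≠ 0 := Nat.cast_ne_zero.mpr (p-n).factorial_ne_zero
    have hf3 : ((p.factorial : ℂ)) ≠ 0 := Nat.cast_ne_zero.mpr p.factorial_ne_zero
    have hwn : w ^ p ≠ 0 := pow_ne_zero _ hw
    rw [div_mul_div_comm]
    have hwp : w ^ n * (n.factorial : ℂ) * (w ^ (p-n) * ((p-n).factorial : ℂ))
        = w ^ p * ((n.factorial : ℂ) * ((p-n).factorial : ℂ)) := by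
      rw [mul_mul_mul_comm, ← pow_add, Nat.add_sub_cancel' hn']
    rw [hwp, div_eq_div_iff (mul_ne_zero hwn (mul_ne_zero hf1 hf2)) (mul_ne_zero hwn hf3), hfact]
    ring
  rw [Finset.sum_congr rfl h1, ← Finset.sum_div]
  rw [← add_pow z (-z) p]
  rw [add_neg_cancel, zero_pow_eq]
  split_ifs with hp
  · subst hp; simp
  · simp

private lemma ww_key (U : Module.End ℂ (MvPolynomial (Fin 2) ℂ)) (u v : ℕ → ℂ)
    (huv : ∀ p : ℕ, ∑ n ∈ Finset.range (p+1), u n * v (p - n) = if p = 0 then 1 else 0)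
    {N : ℕ} {b : MvPolynomial (Fin 2) ℂ} (hb : ∀ p, N < p → (U ^ p) b = 0) :
    ∑ n ∈ Finset.range (N+1), u n • (U ^ n)
      (∑ m ∈ Finset.range (N+1), v m • (U ^ m) b) = b := by
  have h1 : ∀ n, (U ^ n) (∑ m ∈ Finset.range (N+1), v m • (U ^ m) b)
      = ∑ m ∈ Finset.range (N+1), v m • (U ^ (n+m)) b := by
    intro n
    rw [map_sum]
    exact Finset.sum_congr rfl fun m _ => by
      rw [_root_.map_smul, ← Module.End.mul_apply, ← pow_add]
  simp_rw [h1, Finset.smul_sum, smul_smul]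
  rw [← Finset.sum_product']
  classical
  have h2 : ∑ q ∈ Finset.range (N+1) ×ˢ Finset.range (N+1),
        (u q.1 * v q.2) • (U ^ (q.1 + q.2)) b
      = ∑ q ∈ (Finset.range (N+1) ×ˢ Finset.range (N+1)).filter
          (fun q : ℕ × ℕ => q.1 + q.2 ≤ N), (u q.1 * v q.2) • (U ^ (q.1 + q.2)) b := by
    refine (Finset.sum_filter_of_ne fun q _ hne => ?_).symm
    by_contra h
    exact hne (by rw [hb _ (by omega), smul_zero])
  rw [h2]
  have h3 : ∑ q ∈ (Finset.range (N+1) ×ˢ Finset.range (N+1)).filter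
        (fun q : ℕ × ℕ => q.1 + q.2 ≤ N), (u q.1 * v q.2) • (U ^ (q.1 + q.2)) b
      = ∑ x ∈ (Finset.range (N+1)).sigma (fun p => Finset.range (p+1)),
          (u x.2 * v (x.1 - x.2)) • (U ^ x.1) b := by
    refine Finset.sum_nbij' (fun q => ⟨q.1 + q.2, q.1⟩) (fun x => (x.2, x.1 - x.2))
      ?_ ?_ ?_ ?_ ?_
    · intro q hq
      simp only [Finset.mem_filter, Finset.mem_product, Finset.mem_range] at hq
      simp only [Finset.mem_sigma, Finset.mem_range]
      omega
    · intro x hx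
      simp only [Finset.mem_sigma, Finset.mem_range] at hx
      simp only [Finset.mem_filter, Finset.mem_product, Finset.mem_range]
      omega
    · intro q _; simp
    · intro x hx
      simp only [Finset.mem_sigma, Finset.mem_range] at hx
      show (⟨x.snd + (x.fst - x.snd), x.snd⟩ : (_ : ℕ) × ℕ) = x
      have hh : x.snd + (x.fst - x.snd) = x.fst := by omega
      rw [hh]
    · intro q _
      rw [Nat.add_sub_cancel_left]
  rw [h3, Finset.sum_sigma]
  have h4 : ∀ p ∈ Finset.range (N+1),
      (∑ n ∈ Finset.range (p+1), (u n * v (p - n)) • (U ^ p) b)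
        = (if p = 0 then (1:ℂ) else 0) • (U ^ p) b := by
    intro p _
    rw [← Finset.sum_smul, huv p]
  rw [Finset.sum_congr rfl h4]
  rw [Finset.sum_eq_single_of_mem 0 (Finset.mem_range.mpr (by omega))
    (fun p _ hp => by rw [if_neg hp, zero_smul])]
  simp

private def cB : ℕ → ℂ := fun n => (-1 : ℂ) ^ n / (4 ^ n * n.factorial)
private def cA : ℕ → ℂ := fun l => (-Complex.I) ^ l / (2 ^ l * l.factorial)
private def eA : ℕ → ℂ := fun l => Complex.I ^ l / (2 ^ l * l.factorial)
private def eB : ℕ → ℂ := fun n => (1 : ℂ) / (4 ^ n * n.factorial)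

private lemma ww_def (a : MvPolynomial (Fin 2) ℂ) :
    weylWick a = gB cB a.totalDegree (gA cA a.totalDegree a) := rfl

private lemma wwInv_def (a : MvPolynomial (Fin 2) ℂ) :
    weylWickInv a = gA eA a.totalDegree (gB eB a.totalDegree a) := rfl

private lemma ga_key_form (g : ℕ → ℂ) (N : ℕ) (x : MvPolynomial (Fin 2) ℂ) :
    gA g N x = ∑ l ∈ Finset.range (N+1), g l • ((pdX * pdXi) ^ l) x :=
  Finset.sum_congr rfl fun l _ => by rw [ww_commute.mul_pow, Module.End.mul_apply]

private lemma ww_mulpow_zero {p : ℕ} {x : MvPolynomial (Fin 2) ℂ} (h : x.totalDegree < p) :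
    ((pdX * pdXi) ^ p) x = 0 := by
  rw [ww_commute.mul_pow, Module.End.mul_apply]
  exact ww_CL (by omega)

private lemma hd_eB_cB (p : ℕ) :
    ∑ n ∈ Finset.range (p+1), eB n * cB (p - n) = if p = 0 then 1 else 0 := by
  have := ww_delta 1 4 (by norm_num) p
  simpa [eB, cB, one_pow] using this

private lemma hd_cB_eB (p : ℕ) :
    ∑ n ∈ Finset.range (p+1), cB n * eB (p - n) = if p = 0 then 1 else 0 := by
  have := ww_delta (-1) 4 (by norm_num) p
  simpa [eB, cB, one_pow, neg_neg] using this

private lemma hd_eA_cA (p : ℕ) :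
    ∑ n ∈ Finset.range (p+1), eA n * cA (p - n) = if p = 0 then 1 else 0 := by
  have := ww_delta Complex.I 2 (by norm_num) p
  simpa [eA, cA] using this

private lemma hd_cA_eA (p : ℕ) :
    ∑ n ∈ Finset.range (p+1), cA n * eA (p - n) = if p = 0 then 1 else 0 := by
  have := ww_delta (-Complex.I) 2 (by norm_num) p
  simpa [eA, cA, neg_neg] using this

private lemma ww_comp1 {N : ℕ} {a : MvPolynomial (Fin 2) ℂ} (h : a.totalDegree ≤ N) :
    gA eA N (gB eB N (gB cB N (gA cA N a))) = a := by
  rw [ww_swapBBA]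
  have hB : gB eB N (gB cB N a) = a :=
    ww_key pLap eB cB hd_eB_cB (fun p hp => ww_lap_zero (lt_of_le_of_lt h hp))
  rw [hB]
  have hA : gA eA N (gA cA N a) = a := by
    rw [ga_key_form, ga_key_form]
    exact ww_key (pdX * pdXi) eA cA hd_eA_cA
      (fun p hp => ww_mulpow_zero (lt_of_le_of_lt h hp))
  exact hA

private lemma ww_comp2 {N : ℕ} {a : MvPolynomial (Fin 2) ℂ} (h : a.totalDegree ≤ N) :
    gB cB N (gA cA N (gA eA N (gB eB N a))) = a := by
  rw [ww_swapAAB]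
  have hA : gA cA N (gA eA N a) = a := by
    rw [ga_key_form, ga_key_form]
    exact ww_key (pdX * pdXi) cA eA hd_cA_eA
      (fun p hp => ww_mulpow_zero (lt_of_le_of_lt h hp))
  rw [hA]
  exact ww_key pLap cB eB hd_cB_eB (fun p hp => ww_lap_zero (lt_of_le_of_lt h hp))

private lemma wt_stab {N M : ℕ} {x : MvPolynomial (Fin 2) ℂ}
    (h1 : x.totalDegree ≤ N) (h2 : x.totalDegree ≤ M) :
    gB cB N (gA cA N x) = gB cB M (gA cA M x) := by
  rw [ga_stab cA h1 h2]
  exact gb_stab cB ((ga_deg cA M x).trans h1) ((ga_deg cA M x).trans h2)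

private lemma ww_deg_le (a : MvPolynomial (Fin 2) ℂ) :
    (weylWick a).totalDegree ≤ a.totalDegree := by
  rw [ww_def]; exact (gb_deg _ _ _).trans (ga_deg _ _ _)

private lemma wwInv_deg_le (a : MvPolynomial (Fin 2) ℂ) :
    (weylWickInv a).totalDegree ≤ a.totalDegree := by
  rw [wwInv_def]; exact (ga_deg _ _ _).trans (gb_deg _ _ _)

private lemma ww_inv1 (a : MvPolynomial (Fin 2) ℂ) : weylWickInv (weylWick a) = a := by
  have hWa : (weylWick a).totalDegree ≤ a.totalDegree := ww_deg_le a
  rw [wwInv_def]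
  rw [gb_stab eB le_rfl hWa]
  rw [ga_stab eA (gb_deg eB a.totalDegree (weylWick a))
    ((gb_deg eB a.totalDegree (weylWick a)).trans hWa)]
  rw [ww_def]
  exact ww_comp1 le_rfl

private lemma ww_inv2 (a : MvPolynomial (Fin 2) ℂ) : weylWick (weylWickInv a) = a := by
  have hWa : (weylWickInv a).totalDegree ≤ a.totalDegree := wwInv_deg_le a
  rw [ww_def]
  rw [ga_stab cA le_rfl hWa]
  rw [gb_stab cB (ga_deg cA a.totalDegree (weylWickInv a))
    ((ga_deg cA a.totalDegree (weylWickInv a)).trans hWa)]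
  rw [wwInv_def]
  exact ww_comp2 le_rfl


end WWaux

/-- The Weyl-Wick transform preserves the total degree of polynomials, is a
linear bijection of the complex polynomials in two variables onto itself, and `weylWickInv` is
its two-sided inverse. -/
theorem statement11 :
    (∀ a : MvPolynomial (Fin 2) ℂ, (weylWick a).totalDegree = a.totalDegree) ∧
    (∀ a b : MvPolynomial (Fin 2) ℂ, weylWick (a + b) = weylWick a + weylWick b) ∧
    (∀ (c : ℂ) (a : MvPolynomial (Fin 2) ℂ), weylWick (c • a) = c • weylWick a) ∧
    Function.Bijective weylWick ∧
    (∀ a : MvPolynomial (Fin 2) ℂ, weylWickInv (weylWick a) = a) ∧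
    (∀ a : MvPolynomial (Fin 2) ℂ, weylWick (weylWickInv a) = a) := by
  refine ⟨?_, ?_, ?_, ?_, ww_inv1, ww_inv2⟩
  · intro a
    refine le_antisymm (ww_deg_le a) ?_
    calc a.totalDegree = (weylWickInv (weylWick a)).totalDegree := by rw [ww_inv1]
      _ ≤ (weylWick a).totalDegree := wwInv_deg_le _
  · intro a b
    have h1 : (a + b).totalDegree ≤ max a.totalDegree b.totalDegree := MvPolynomial.totalDegree_add a b
    rw [ww_def, ww_def, ww_def]
    rw [wt_stab le_rfl h1, ga_add, gb_add,
      wt_stab (x := a) (le_max_left _ _) le_rfl,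
      wt_stab (x := b) (le_max_right _ _) le_rfl]
  · intro c a
    have h1 : (c • a).totalDegree ≤ a.totalDegree := MvPolynomial.totalDegree_smul_le c a
    rw [ww_def, ww_def]
    rw [wt_stab le_rfl h1, ga_smul, gb_smul]
  · exact Function.bijective_iff_has_inverse.mpr ⟨weylWickInv, ww_inv1, ww_inv2⟩


end
end

section
/- Let p ∈ ℝ. For w ∈ S(ℝ²) let (D₁w)(s,t) = −i ∂w/∂s (s,t). Then for every w ∈ S(ℝ²) and all (x,y) ∈ ℝ², Wig_p[D₁w](x,y) = y·Wig_p[w](x,y) + p·(−i ∂ₓ Wig_p[w])(x,y); that is, Wig_p[D₁w] = (M₂ + pD₁) Wig_p[w]. -/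
open MeasureTheory SchwartzMap Complex Filter

noncomputable section




namespace Stmt17

variable {F : Type*} [NormedAddCommGroup F] [NormedSpace ℝ F]

lemma decay4 (f : 𝓢(ℝ × ℝ, F)) :
    ∃ C : ℝ, 0 ≤ C ∧ ∀ u : ℝ × ℝ, ‖f u‖ ≤ C * ((1 + ‖u‖) ^ 4)⁻¹ := by
  refine ⟨2 ^ 4 * (Finset.Iic ((4, 0) : ℕ × ℕ)).sup
      (fun m => SchwartzMap.seminorm ℝ m.1 m.2) f, by positivity, fun u => ?_⟩
  have h := one_add_le_sup_seminorm_apply (𝕜 := ℝ) (m := (4, 0)) le_rfl le_rfl f u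
  rw [norm_iteratedFDeriv_zero] at h
  have hpos : (0 : ℝ) < (1 + ‖u‖) ^ 4 := by positivity
  rw [mul_comm, ← le_div_iff₀ hpos] at h
  simpa [div_eq_mul_inv] using h

lemma comp_decay (p : ℝ) (f : 𝓢(ℝ × ℝ, F)) :
    ∃ C : ℝ, 0 ≤ C ∧ ∀ x' z : ℝ,
      ‖f (x' + (1 - p) * z, x' - p * z)‖ ≤ C * ((1 + |z|) ^ 4)⁻¹ := by
  obtain ⟨C, hC0, hC⟩ := decay4 f
  refine ⟨16 * C, by positivity, fun x' z => ?_⟩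
  set u : ℝ × ℝ := (x' + (1 - p) * z, x' - p * z) with hu
  have h1 : |z| ≤ 2 * ‖u‖ := by
    have e1 : ‖u.1‖ ≤ ‖u‖ := norm_fst_le u
    have e2 : ‖u.2‖ ≤ ‖u‖ := norm_snd_le u
    have : z = u.1 - u.2 := by simp [hu]; ring
    rw [this]
    calc |u.1 - u.2| ≤ ‖u.1‖ + ‖u.2‖ := abs_sub _ _
      _ ≤ 2 * ‖u‖ := by linarith
  have h2 : 1 + |z| ≤ 2 * (1 + ‖u‖) := by
    have := norm_nonneg u; linarith
  have h4 : (1 + |z|) ^ 4 ≤ 16 * (1 + ‖u‖) ^ 4 := by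
    calc (1 + |z|) ^ 4 ≤ (2 * (1 + ‖u‖)) ^ 4 := by
          apply pow_le_pow_left₀ (by positivity) h2
      _ = 16 * (1 + ‖u‖) ^ 4 := by ring
  have hpos1 : (0 : ℝ) < (1 + |z|) ^ 4 := by positivity
  have hpos2 : (0 : ℝ) < (1 + ‖u‖) ^ 4 := by positivity
  calc ‖f u‖ ≤ C * ((1 + ‖u‖) ^ 4)⁻¹ := hC u
    _ ≤ 16 * C * ((1 + |z|) ^ 4)⁻¹ := by
        rw [← div_eq_mul_inv, ← div_eq_mul_inv, div_le_div_iff₀ hpos2 hpos1]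
        nlinarith [mul_le_mul_of_nonneg_left h4 hC0]

lemma integrable_inv_pow {n : ℕ} (hn : 1 < (n : ℝ)) :
    Integrable (fun z : ℝ => ((1 + |z|) ^ n)⁻¹) := by
  have h := integrable_one_add_norm (E := ℝ) (μ := volume) (r := n) (by simpa using hn)
  refine h.congr ?_
  filter_upwards with z
  rw [Real.rpow_neg (by positivity), Real.rpow_natCast, Real.norm_eq_abs]

lemma norm_exp_neg_I (t : ℝ) : ‖Complex.exp (-(Complex.I * t))‖ = 1 := by
  rw [show -(Complex.I * (t : ℂ)) = ((-t : ℝ) : ℂ) * Complex.I by push_cast; ring,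
    Complex.norm_exp_ofReal_mul_I]

end Stmt17

open Stmt17 in
set_option maxHeartbeats 1000000 in
/-- For every `w ∈ S(ℝ²)`, `Wig_p[D₁ w] = (M₂ + pD₁) Wig_p[w]`. -/
theorem statement17 (p : ℝ) (w : 𝓢(ℝ × ℝ, ℂ)) (x y : ℝ) :
    Wig p (cD1 ⇑w) (x, y) = (y : ℂ) * Wig p ⇑w (x, y)
      + (p : ℂ) * (-Complex.I * fderiv ℝ (Wig p ⇑w) (x, y) (1, 0)) := by
  classical
  obtain ⟨C₁, hC₁0, hC₁⟩ := comp_decay p w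
  obtain ⟨C₂, hC₂0, hC₂'⟩ := comp_decay p (SchwartzMap.fderivCLM ℝ (ℝ × ℝ) ℂ w)
  have hC₂ : ∀ x' z : ℝ, ‖fderiv ℝ (⇑w) (x' + (1 - p) * z, x' - p * z)‖
      ≤ C₂ * ((1 + |z|) ^ 4)⁻¹ := by
    intro x' z
    simpa [SchwartzMap.fderivCLM_apply] using hC₂' x' z
  set c : ℂ := (((2 * Real.pi) ^ (-(1/2 : ℝ)) : ℝ) : ℂ) with hc
  -- the integrand and its derivative in the parameter v
  set B : ℝ → ℝ × ℝ → ℝ × ℝ := fun z v => (v.1 + (1 - p) * z, v.1 - p * z) with hB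
  set Bd : (ℝ × ℝ) →L[ℝ] ℝ × ℝ :=
    (ContinuousLinearMap.fst ℝ ℝ ℝ).prod (ContinuousLinearMap.fst ℝ ℝ ℝ) with hBd
  set L : ℝ → (ℝ × ℝ) →L[ℝ] ℂ := fun z =>
    (-(Complex.I * z)) • (Complex.ofRealCLM.comp (ContinuousLinearMap.snd ℝ ℝ ℝ)) with hL
  set Fu : ℝ × ℝ → ℝ → ℂ := fun v z =>
    Complex.exp (-(Complex.I * z * v.2)) * w (B z v) with hFu
  set Fu' : ℝ × ℝ → ℝ → (ℝ × ℝ) →L[ℝ] ℂ := fun v z =>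
    Complex.exp (-(Complex.I * z * v.2)) • ((fderiv ℝ (⇑w) (B z v)).comp Bd)
      + w (B z v) • (Complex.exp (-(Complex.I * z * v.2)) • L z) with hFu'
  have wdiff : Differentiable ℝ (⇑w) := w.differentiable
  have wfdcont : Continuous (fun u => fderiv ℝ (⇑w) u) :=
    (w.smooth ⊤).continuous_fderiv (by simp)
  have hBcont : ∀ x' : ℝ, Continuous (fun z : ℝ => B z (x', y)) := by
    intro x'; simp only [hB]; fun_prop
  have hexp1 : ∀ (z : ℝ) (t : ℝ), ‖Complex.exp (-(Complex.I * z * t))‖ = 1 := by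
    intro z t
    rw [show -(Complex.I * (z:ℂ) * (t:ℂ)) = ((-(z*t) : ℝ) : ℂ) * Complex.I by push_cast; ring,
      Complex.norm_exp_ofReal_mul_I]
  have hBd_norm : ‖Bd‖ ≤ 1 := by
    apply ContinuousLinearMap.opNorm_le_bound _ zero_le_one
    intro q
    simp only [hBd, ContinuousLinearMap.prod_apply, ContinuousLinearMap.coe_fst']
    rw [one_mul, Prod.norm_def]
    simp only [max_self]
    exact norm_fst_le q
  have hL_norm : ∀ z : ℝ, ‖L z‖ ≤ |z| := by
    intro z
    apply ContinuousLinearMap.opNorm_le_bound _ (abs_nonneg z)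
    intro q
    simp only [hL, ContinuousLinearMap.smul_apply, ContinuousLinearMap.comp_apply,
      ContinuousLinearMap.coe_snd', Complex.ofRealCLM_apply]
    rw [norm_smul]
    have : ‖-(Complex.I * z)‖ = |z| := by
      simp
    rw [this]
    rw [Complex.norm_real]
    gcongr
    exact norm_snd_le q
  -- pointwise differentiability in v
  have hdiff : ∀ (z : ℝ) (v : ℝ × ℝ), HasFDerivAt (fun v => Fu v z) (Fu' v z) v := by
    intro z v
    have hLd : HasFDerivAt (fun v : ℝ × ℝ => Complex.exp (-(Complex.I * z * v.2)))
        (Complex.exp (-(Complex.I * z * v.2)) • L z) v := by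
      have h1 : HasFDerivAt (fun v : ℝ × ℝ => (L z) v) (L z) v := (L z).hasFDerivAt
      have h2 := h1.cexp
      have heq : (fun v : ℝ × ℝ => Complex.exp ((L z) v))
          = fun v : ℝ × ℝ => Complex.exp (-(Complex.I * z * v.2)) := by
        funext q
        congr 1
        simp only [hL, ContinuousLinearMap.smul_apply, ContinuousLinearMap.comp_apply,
          ContinuousLinearMap.coe_snd', Complex.ofRealCLM_apply, smul_eq_mul]
        ring
      rw [heq] at h2
      refine h2.congr_fderiv ?_
      congr 2
      simp only [hL, ContinuousLinearMap.smul_apply, ContinuousLinearMap.comp_apply,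
        ContinuousLinearMap.coe_snd', Complex.ofRealCLM_apply, smul_eq_mul]
      ring
    have hBdiff : HasFDerivAt (fun v : ℝ × ℝ => B z v) Bd v := by
      have h1 : HasFDerivAt (fun v : ℝ × ℝ => Bd v) Bd v := Bd.hasFDerivAt
      have h2 := h1.add_const (((1 - p) * z, -(p * z)) : ℝ × ℝ)
      have heq : (fun v : ℝ × ℝ => Bd v + ((1 - p) * z, -(p * z)))
          = fun v : ℝ × ℝ => B z v := by
        funext q
        simp only [hBd, hB, ContinuousLinearMap.prod_apply, ContinuousLinearMap.coe_fst',
          Prod.mk_add_mk]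
        constructor <;> ring
      rwa [heq] at h2
    have hgd : HasFDerivAt (fun v : ℝ × ℝ => w (B z v))
        ((fderiv ℝ (⇑w) (B z v)).comp Bd) v :=
      ((wdiff (B z v)).hasFDerivAt).comp v hBdiff
    refine (hLd.mul' hgd).congr_fderiv (ContinuousLinearMap.ext fun q => ?_)
    simp only [hFu', ContinuousLinearMap.add_apply, ContinuousLinearMap.smulRight_apply,
      ContinuousLinearMap.smul_apply, smul_eq_mul, op_smul_eq_mul]
    ring
  -- operator norm bound for Fu'
  have hFu'_bound : ∀ (v : ℝ × ℝ) (z : ℝ),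
      ‖Fu' v z‖ ≤ (C₁ + C₂) * ((1 + |z|) ^ 3)⁻¹ := by
    intro v z
    have hb1 : ‖fderiv ℝ (⇑w) (B z v)‖ ≤ C₂ * ((1 + |z|) ^ 4)⁻¹ := hC₂ v.1 z
    have hb2 : ‖w (B z v)‖ ≤ C₁ * ((1 + |z|) ^ 4)⁻¹ := hC₁ v.1 z
    have ha0 : (0:ℝ) ≤ ((1 + |z|) ^ 4)⁻¹ := by positivity
    have hkey : ((1 + |z|) : ℝ) * ((1 + |z|) ^ 4)⁻¹ = ((1 + |z|) ^ 3)⁻¹ := by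
      rw [pow_succ]
      have h3 : ((1:ℝ) + |z|) ^ 3 ≠ 0 := by positivity
      have h1 : ((1:ℝ) + |z|) ≠ 0 := by positivity
      field_simp
    have t1 : ‖Complex.exp (-(Complex.I * z * v.2)) • ((fderiv ℝ (⇑w) (B z v)).comp Bd)‖
        ≤ ‖fderiv ℝ (⇑w) (B z v)‖ := by
      refine (norm_smul_le (Complex.exp (-(Complex.I * z * v.2)))
        ((fderiv ℝ (⇑w) (B z v)).comp Bd)).trans ?_
      rw [hexp1 z v.2, one_mul]
      refine (ContinuousLinearMap.opNorm_comp_le _ _).trans ?_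
      calc ‖fderiv ℝ (⇑w) (B z v)‖ * ‖Bd‖ ≤ ‖fderiv ℝ (⇑w) (B z v)‖ * 1 := by gcongr
        _ = _ := mul_one _
    have t2 : ‖w (B z v) • (Complex.exp (-(Complex.I * z * v.2)) • L z)‖
        ≤ ‖w (B z v)‖ * |z| := by
      refine (norm_smul_le (w (B z v)) (Complex.exp (-(Complex.I * z * v.2)) • L z)).trans ?_
      gcongr
      refine (norm_smul_le (Complex.exp (-(Complex.I * z * v.2))) (L z)).trans ?_
      rw [hexp1 z v.2, one_mul]
      exact hL_norm z
    calc ‖Fu' v z‖ ≤ ‖Complex.exp (-(Complex.I * z * v.2)) • ((fderiv ℝ (⇑w) (B z v)).comp Bd)‖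
          + ‖w (B z v) • (Complex.exp (-(Complex.I * z * v.2)) • L z)‖ := norm_add_le _ _
      _ ≤ ‖fderiv ℝ (⇑w) (B z v)‖ + ‖w (B z v)‖ * |z| := add_le_add t1 t2
      _ ≤ (C₂ * ((1 + |z|) ^ 4)⁻¹) + (C₁ * ((1 + |z|) ^ 4)⁻¹) * |z| := by
          gcongr
      _ ≤ (C₁ + C₂) * ((1 + |z|) * ((1 + |z|) ^ 4)⁻¹) := by
          nlinarith [abs_nonneg z, mul_nonneg hC₁0 ha0, mul_nonneg hC₂0 ha0,
            mul_nonneg (mul_nonneg hC₁0 ha0) (abs_nonneg z),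
            mul_nonneg (mul_nonneg hC₂0 ha0) (abs_nonneg z)]
      _ = (C₁ + C₂) * ((1 + |z|) ^ 3)⁻¹ := by rw [hkey]
  -- integrable bounds
  have int4C : ∀ C : ℝ, Integrable (fun z : ℝ => C * ((1 + |z|) ^ 4)⁻¹) :=
    fun C => (integrable_inv_pow (by norm_num)).const_mul _
  have int3 : Integrable (fun z : ℝ => (C₁ + C₂) * ((1 + |z|) ^ 3)⁻¹) :=
    (integrable_inv_pow (by norm_num)).const_mul _
  -- continuity in z
  have hexpc : Continuous (fun z : ℝ => Complex.exp (-(Complex.I * z * y))) := by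
    apply Complex.continuous_exp.comp
    fun_prop
  have hFcont : ∀ v : ℝ × ℝ, Continuous (fun z => Fu v z) := by
    intro v
    simp only [hFu, hB]
    apply Continuous.mul
    · apply Complex.continuous_exp.comp
      fun_prop
    · exact w.continuous.comp (by fun_prop)
  have hF'cont : Continuous (fun z => Fu' (x, y) z) := by
    simp only [hFu']
    apply Continuous.add
    · apply Continuous.fun_smul
      · apply Complex.continuous_exp.comp
        fun_prop
      · exact (wfdcont.comp (hBcont x)).clm_comp_const Bd
    · apply Continuous.fun_smul
      · exact w.continuous.comp (hBcont x)
      · apply Continuous.fun_smul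
        · apply Complex.continuous_exp.comp
          fun_prop
        · simp only [hL]
          fun_prop
  have hFu_int : Integrable (fun z => Fu (x, y) z) := by
    refine (int4C C₁).mono' (hFcont (x, y)).aestronglyMeasurable ?_
    filter_upwards with z
    simp only [hFu, hB]
    rw [norm_mul, hexp1, one_mul]
    exact hC₁ x z
  have hFu'_int : Integrable (fun z => Fu' (x, y) z) := by
    refine int3.mono' hF'cont.aestronglyMeasurable ?_
    filter_upwards with z
    exact hFu'_bound (x, y) z
  -- differentiation under the integral sign
  have hW : HasFDerivAt (fun v : ℝ × ℝ => ∫ z : ℝ, Fu v z) (∫ z : ℝ, Fu' (x, y) z)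
      ((x, y) : ℝ × ℝ) := by
    apply hasFDerivAt_integral_of_dominated_of_fderiv_le
      (bound := fun z => (C₁ + C₂) * ((1 + |z|) ^ 3)⁻¹) (Metric.ball_mem_nhds _ zero_lt_one)
    · exact Filter.Eventually.of_forall fun v => (hFcont v).aestronglyMeasurable
    · exact hFu_int
    · exact hF'cont.aestronglyMeasurable
    · exact ae_of_all _ fun z v _ => hFu'_bound v z
    · exact int3
    · exact ae_of_all _ fun z v _ => hdiff z v
  have hWig : HasFDerivAt (Wig p ⇑w) (c • ∫ z : ℝ, Fu' (x, y) z) ((x, y) : ℝ × ℝ) := by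
    have hWeq : Wig p ⇑w = fun v : ℝ × ℝ => c * ∫ z : ℝ, Fu v z := rfl
    rw [hWeq]
    exact hW.const_mul c
  -- the x-partial derivative of the Wigner transform
  have hfderiv10 : fderiv ℝ (Wig p ⇑w) (x, y) ((1, 0) : ℝ × ℝ)
      = c * ∫ z : ℝ, Complex.exp (-(Complex.I * z * y)) *
          fderiv ℝ (⇑w) (x + (1 - p) * z, x - p * z) ((1, 1) : ℝ × ℝ) := by
    rw [hWig.fderiv, ContinuousLinearMap.smul_apply, smul_eq_mul]
    congr 1
    rw [ContinuousLinearMap.integral_apply hFu'_int]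
    apply congrArg
    funext z
    simp only [hFu', hB, hL, ContinuousLinearMap.add_apply, ContinuousLinearMap.smul_apply,
      ContinuousLinearMap.comp_apply, ContinuousLinearMap.prod_apply,
      ContinuousLinearMap.coe_fst', ContinuousLinearMap.coe_snd',
      Complex.ofRealCLM_apply, smul_eq_mul, hBd]
    norm_num
  -- the slice function and its derivative
  set φ : ℝ → ℂ := fun z => w (x + (1 - p) * z, x - p * z) with hφ
  have hφd : ∀ z : ℝ, HasDerivAt φ
      (fderiv ℝ (⇑w) (x + (1 - p) * z, x - p * z) ((1 - p, -p) : ℝ × ℝ)) z := by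
    intro z
    have h1 : HasDerivAt (fun z : ℝ => x + (1 - p) * z) (1 - p) z := by
      simpa using ((hasDerivAt_id z).const_mul (1 - p)).const_add x
    have h2 : HasDerivAt (fun z : ℝ => x - p * z) (-p) z := by
      simpa [sub_eq_add_neg, neg_mul] using ((hasDerivAt_id z).const_mul (-p)).const_add x
    have h3 : HasDerivAt (fun z : ℝ => ((x + (1 - p) * z, x - p * z) : ℝ × ℝ))
        ((1 - p, -p) : ℝ × ℝ) z := h1.prodMk h2
    exact ((wdiff _).hasFDerivAt).comp_hasDerivAt z h3
  have hφderiv : deriv φ = fun z =>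
      fderiv ℝ (⇑w) (x + (1 - p) * z, x - p * z) ((1 - p, -p) : ℝ × ℝ) :=
    funext fun z => (hφd z).deriv
  have hφdiff : Differentiable ℝ φ := fun z => (hφd z).differentiableAt
  have hφcont : Continuous φ := w.continuous.comp (by fun_prop)
  have hφint : Integrable φ := by
    refine (int4C C₁).mono' hφcont.aestronglyMeasurable ?_
    filter_upwards with z
    exact hC₁ x z
  -- integrability of directional-derivative integrands
  have hgcont : ∀ vec : ℝ × ℝ, Continuous (fun z : ℝ =>
      fderiv ℝ (⇑w) (x + (1 - p) * z, x - p * z) vec) := by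
    intro vec
    exact (wfdcont.comp (by fun_prop)).clm_apply continuous_const
  have hgbound : ∀ (vec : ℝ × ℝ) (z : ℝ),
      ‖fderiv ℝ (⇑w) (x + (1 - p) * z, x - p * z) vec‖
        ≤ (C₂ * ‖vec‖) * ((1 + |z|) ^ 4)⁻¹ := by
    intro vec z
    calc ‖fderiv ℝ (⇑w) (x + (1 - p) * z, x - p * z) vec‖
        ≤ ‖fderiv ℝ (⇑w) (x + (1 - p) * z, x - p * z)‖ * ‖vec‖ :=
          ContinuousLinearMap.le_opNorm _ _
      _ ≤ (C₂ * ((1 + |z|) ^ 4)⁻¹) * ‖vec‖ := by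
          gcongr
          exact hC₂ x z
      _ = (C₂ * ‖vec‖) * ((1 + |z|) ^ 4)⁻¹ := by ring
  have hgint : ∀ vec : ℝ × ℝ, Integrable (fun z : ℝ =>
      Complex.exp (-(Complex.I * z * y)) *
        fderiv ℝ (⇑w) (x + (1 - p) * z, x - p * z) vec) := by
    intro vec
    refine (int4C (C₂ * ‖vec‖)).mono' (hexpc.mul (hgcont vec)).aestronglyMeasurable ?_
    filter_upwards with z
    rw [norm_mul, hexp1, one_mul]
    exact hgbound vec z
  have hφ'int : Integrable (deriv φ) := by
    rw [hφderiv]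
    refine (int4C (C₂ * ‖((1 - p, -p) : ℝ × ℝ)‖)).mono'
      (hgcont ((1 - p, -p) : ℝ × ℝ)).aestronglyMeasurable ?_
    filter_upwards with z
    exact hgbound _ z
  -- the Fourier/integration-by-parts identity
  have four : (∫ z : ℝ, Complex.exp (-(Complex.I * z * y)) * deriv φ z)
      = (Complex.I * y) * ∫ z : ℝ, Complex.exp (-(Complex.I * z * y)) * φ z := by
    have hF := Real.fourier_deriv hφint hφdiff hφ'int
    have hFy := congrFun hF (y / (2 * Real.pi))
    rw [Real.fourier_real_eq_integral_exp_smul,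
      Real.fourier_real_eq_integral_exp_smul] at hFy
    have hker : ∀ (v : ℝ), (((-2 : ℝ) * Real.pi * v * (y / (2 * Real.pi)) : ℝ) : ℂ) * Complex.I
        = -(Complex.I * v * y) := by
      intro v
      have hr : (-2 : ℝ) * Real.pi * v * (y / (2 * Real.pi)) = -(v * y) := by
        field_simp
      rw [hr]
      push_cast
      ring
    simp only [smul_eq_mul] at hFy
    have hL2 : (∫ v : ℝ, Complex.exp ((((-2 : ℝ) * Real.pi * v * (y / (2 * Real.pi)) : ℝ) : ℂ)
        * Complex.I) * deriv φ v) = ∫ z : ℝ, Complex.exp (-(Complex.I * z * y)) * deriv φ z := by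
      apply congrArg
      funext v
      rw [hker v]
    have hR2 : (∫ v : ℝ, Complex.exp ((((-2 : ℝ) * Real.pi * v * (y / (2 * Real.pi)) : ℝ) : ℂ)
        * Complex.I) * φ v) = ∫ z : ℝ, Complex.exp (-(Complex.I * z * y)) * φ z := by
      apply congrArg
      funext v
      rw [hker v]
    rw [hL2, hR2] at hFy
    rw [hFy]
    congr 1
    have hπ : (Real.pi : ℂ) ≠ 0 := by
      exact_mod_cast Real.pi_ne_zero
    push_cast
    field_simp
  -- decomposition of the direction (1,0)
  have hsplit : ∀ u : ℝ × ℝ, fderiv ℝ (⇑w) u ((1, 0) : ℝ × ℝ)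
      = (p : ℂ) * fderiv ℝ (⇑w) u ((1, 1) : ℝ × ℝ)
        + fderiv ℝ (⇑w) u ((1 - p, -p) : ℝ × ℝ) := by
    intro u
    have h10 : ((1, 0) : ℝ × ℝ) = p • ((1, 1) : ℝ × ℝ) + ((1 - p, -p) : ℝ × ℝ) := by
      simp only [Prod.smul_mk, smul_eq_mul, Prod.mk_add_mk, Prod.mk.injEq]
      constructor <;> ring
    rw [h10, (fderiv ℝ (⇑w) u).map_add, (fderiv ℝ (⇑w) u).map_smul]
    rw [Complex.real_smul]
  -- put the left-hand side in split form
  have lhs_eq : Wig p (cD1 ⇑w) (x, y)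
      = c * ((-Complex.I * p) * (∫ z : ℝ, Complex.exp (-(Complex.I * z * y)) *
            fderiv ℝ (⇑w) (x + (1 - p) * z, x - p * z) ((1, 1) : ℝ × ℝ))
          + (-Complex.I) * (∫ z : ℝ, Complex.exp (-(Complex.I * z * y)) * deriv φ z)) := by
    have step1 : Wig p (cD1 ⇑w) (x, y)
        = c * ∫ z : ℝ, ((-Complex.I * p) * (Complex.exp (-(Complex.I * z * y)) *
              fderiv ℝ (⇑w) (x + (1 - p) * z, x - p * z) ((1, 1) : ℝ × ℝ))
            + (-Complex.I) * (Complex.exp (-(Complex.I * z * y)) * deriv φ z)) := by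
      simp only [Wig, cD1]
      congr 1
      apply congrArg
      funext z
      rw [hsplit, hφderiv]
      ring
    rw [step1]
    rw [integral_add ((hgint ((1, 1) : ℝ × ℝ)).const_mul _) (by
      have := (hgint ((1 - p, -p) : ℝ × ℝ)).const_mul (-Complex.I)
      simpa [hφderiv] using this)]
    rw [integral_const_mul, integral_const_mul]
  -- final assembly
  rw [lhs_eq, four]
  have hwig_eq : Wig p ⇑w (x, y) = c * ∫ z : ℝ, Complex.exp (-(Complex.I * z * y)) * φ z := rfl
  rw [hwig_eq, hfderiv10]
  linear_combination (-(c * (y : ℂ) * (∫ z : ℝ, Complex.exp (-(Complex.I * z * y)) * φ z))) *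
    Complex.I_mul_I

end
end

section
/- Let p ∈ ℝ and q = 1−p. For w ∈ S(ℝ²) let (M₁w)(s,t) = s·w(s,t). Then for every w ∈ S(ℝ²) and all (x,y) ∈ ℝ², Wig_p[M₁w](x,y) = x·Wig_p[w](x,y) − q·(−i ∂_y Wig_p[w])(x,y); that is, Wig_p[M₁w] = (M₁ − qD₂) Wig_p[w]. -/
open MeasureTheory SchwartzMap Complex Filter

noncomputable section




lemma aux_bound (t cw dw Cw Dw : ℝ) (ht : 0 ≤ t) (hcw : 0 ≤ cw) (hdw : 0 ≤ dw)
    (h1 : (1 + t^3/8) * cw ≤ Cw) (h2 : (1 + t^3/8) * dw ≤ Dw) :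
    dw + cw * t ≤ (16 * (Cw + Dw)) * (1 + t^2)⁻¹ := by
  rw [← div_eq_mul_inv, le_div_iff₀ (by positivity)]
  have key : (1 + t) * (1 + t^2) ≤ 16 + 2 * t^3 := by
    nlinarith [mul_nonneg ht (sq_nonneg (t-1)), sq_nonneg (t-1)]
  nlinarith [mul_le_mul_of_nonneg_left key (add_nonneg hcw hdw),
    mul_nonneg hdw (sq_nonneg t), mul_nonneg (mul_nonneg hdw ht) (sq_nonneg t),
    mul_nonneg hcw (sq_nonneg t)]

lemma schwartz_line_decay {E : Type*} [NormedAddCommGroup E] [NormedSpace ℝ E]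
    (f : 𝓢(ℝ × ℝ, E)) :
    ∃ C : ℝ, 0 ≤ C ∧ ∀ (s z p : ℝ),
      (1 + |z|^3/8) * ‖f (s + (1-p)*z, s - p*z)‖ ≤ C := by
  obtain ⟨C0, hC0, h0⟩ := f.decay 0 0
  obtain ⟨C3, hC3, h3⟩ := f.decay 3 0
  refine ⟨C0 + C3, by positivity, fun s z p => ?_⟩
  set v : ℝ × ℝ := (s + (1-p)*z, s - p*z) with hv
  have h0' : ‖f v‖ ≤ C0 := by simpa [norm_iteratedFDeriv_zero] using h0 v
  have h3' : ‖v‖^3 * ‖f v‖ ≤ C3 := by simpa [norm_iteratedFDeriv_zero] using h3 v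
  have hzv : |z| / 2 ≤ ‖v‖ := by
    have h1 : |z| ≤ |s + (1-p)*z| + |s - p*z| := by
      have hzz : z = (s + (1-p)*z) - (s - p*z) := by ring
      calc |z| = |(s + (1-p)*z) - (s - p*z)| := by rw [← hzz]
      _ ≤ _ := abs_sub _ _
    have hnorm : ‖v‖ = max |s + (1-p)*z| |s - p*z| := by
      simp [hv, Prod.norm_def, Real.norm_eq_abs]
    have := le_max_left |s + (1-p)*z| |s - p*z|
    have := le_max_right |s + (1-p)*z| |s - p*z|
    rw [hnorm]; linarith
  have hcube : (|z|/2)^3 ≤ ‖v‖^3 := pow_le_pow_left₀ (by positivity) hzv 3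
  have hnn : 0 ≤ ‖f v‖ := norm_nonneg _
  nlinarith [mul_le_mul_of_nonneg_right hcube hnn]

/-- For every `w ∈ S(ℝ²)`, `Wig_p[M₁ w] = (M₁ - qD₂) Wig_p[w]`
where `q = 1 - p`. -/
theorem statement18 (p q : ℝ) (hq : q = 1 - p) (w : 𝓢(ℝ × ℝ, ℂ)) (x y : ℝ) :
    Wig p (fun v : ℝ × ℝ => (v.1 : ℂ) * w v) (x, y) = (x : ℂ) * Wig p ⇑w (x, y)
      - (q : ℂ) * (-Complex.I * fderiv ℝ (Wig p ⇑w) (x, y) (0, 1)) := by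
  subst hq
  set c : ℂ := (((2 * Real.pi) ^ (-(1/2 : ℝ)) : ℝ) : ℂ) with hc
  set A : (ℝ × ℝ) →L[ℝ] (ℝ × ℝ) :=
    (ContinuousLinearMap.fst ℝ ℝ ℝ).prod (ContinuousLinearMap.fst ℝ ℝ ℝ) with hA
  set R : (ℝ × ℝ) →L[ℝ] ℂ := Complex.ofRealCLM.comp (ContinuousLinearMap.snd ℝ ℝ ℝ) with hR
  set F : ℝ × ℝ → ℝ → ℂ := fun v z =>
    Complex.exp (-(Complex.I * z * v.2)) * w (v.1 + (1 - p) * z, v.1 - p * z) with hF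
  set F' : ℝ × ℝ → ℝ → (ℝ × ℝ) →L[ℝ] ℂ := fun v z =>
    Complex.exp (-(Complex.I * z * v.2)) • ((fderiv ℝ (⇑w) (v.1 + (1 - p) * z, v.1 - p * z)).comp A)
      + w (v.1 + (1 - p) * z, v.1 - p * z) •
        (Complex.exp (-(Complex.I * z * v.2)) • ((-(Complex.I * z)) • R)) with hF'
  -- norm facts
  have hAle : ‖A‖ ≤ 1 := by
    refine ContinuousLinearMap.opNorm_le_bound _ zero_le_one fun h => ?_
    simp only [hA, ContinuousLinearMap.prod_apply, ContinuousLinearMap.coe_fst']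
    rw [Prod.norm_def]
    simp [Prod.norm_def, le_max_left, Real.norm_eq_abs]
  have hRle : ‖R‖ ≤ 1 := by
    refine ContinuousLinearMap.opNorm_le_bound _ zero_le_one fun h => ?_
    simp only [hR, ContinuousLinearMap.coe_comp', Function.comp_apply,
      ContinuousLinearMap.coe_snd', Complex.ofRealCLM_apply, Complex.norm_real]
    rw [Prod.norm_def]
    simp [le_max_right]
  have hexp : ∀ (z t : ℝ), ‖Complex.exp (-(Complex.I * z * t))‖ = 1 := by
    intro z t
    rw [Complex.norm_exp]
    simp
  -- decay constants
  obtain ⟨Cw, hCwnn, hCw⟩ := schwartz_line_decay w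
  obtain ⟨Dw, hDwnn, hDw⟩ := schwartz_line_decay (SchwartzMap.fderivCLM ℝ (ℝ × ℝ) ℂ w)
  have hDw' : ∀ (s z : ℝ),
      (1 + |z|^3/8) * ‖fderiv ℝ (⇑w) (s + (1-p)*z, s - p*z)‖ ≤ Dw := by
    intro s z
    simpa [SchwartzMap.fderivCLM_apply] using hDw s z p
  -- pointwise bound for F'
  have hF'bound : ∀ (v : ℝ × ℝ) (z : ℝ), ‖F' v z‖ ≤ (16 * (Cw + Dw)) * (1 + z^2)⁻¹ := by
    intro v z
    have hIz : ‖-(Complex.I * (z:ℂ))‖ = |z| := by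
      rw [norm_neg, norm_mul, Complex.norm_I, one_mul, Complex.norm_real, Real.norm_eq_abs]
    have e1 : ‖Complex.exp (-(Complex.I * z * v.2)) •
        (fderiv ℝ (⇑w) (v.1 + (1-p)*z, v.1 - p*z)).comp A‖
        ≤ ‖fderiv ℝ (⇑w) (v.1 + (1-p)*z, v.1 - p*z)‖ := by
      refine (ContinuousLinearMap.opNorm_smul_le _ _).trans ?_
      rw [hexp, one_mul]
      refine (ContinuousLinearMap.opNorm_comp_le _ _).trans ?_
      calc _ ≤ ‖fderiv ℝ (⇑w) (v.1 + (1-p)*z, v.1 - p*z)‖ * 1 := by gcongr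
        _ = _ := mul_one _
    have e2 : ‖w (v.1 + (1-p)*z, v.1 - p*z) •
        Complex.exp (-(Complex.I * z * v.2)) • (-(Complex.I * z)) • R‖
        ≤ ‖w (v.1 + (1-p)*z, v.1 - p*z)‖ * |z| := by
      refine (ContinuousLinearMap.opNorm_smul_le _ _).trans ?_
      gcongr
      refine (ContinuousLinearMap.opNorm_smul_le _ _).trans ?_
      rw [hexp, one_mul]
      refine (ContinuousLinearMap.opNorm_smul_le _ _).trans ?_
      rw [hIz]
      calc _ ≤ |z| * 1 := by gcongr
        _ = _ := mul_one _
    have h1 : ‖F' v z‖ ≤ ‖fderiv ℝ (⇑w) (v.1 + (1-p)*z, v.1 - p*z)‖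
        + ‖w (v.1 + (1-p)*z, v.1 - p*z)‖ * |z| :=
      (norm_add_le _ _).trans (add_le_add e1 e2)
    refine h1.trans ?_
    have := aux_bound |z| (‖w (v.1 + (1-p)*z, v.1 - p*z)‖)
      (‖fderiv ℝ (⇑w) (v.1 + (1-p)*z, v.1 - p*z)‖) Cw Dw (abs_nonneg z)
      (norm_nonneg _) (norm_nonneg _) (hCw v.1 z p) (hDw' v.1 z)
    simpa [_root_.sq_abs] using this
  -- measurability
  have hFmeas : ∀ v : ℝ × ℝ, AEStronglyMeasurable (F v) volume := by
    intro v
    apply Continuous.aestronglyMeasurable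
    apply Continuous.mul
    · exact Complex.continuous_exp.comp (by fun_prop)
    · exact w.continuous.comp (by fun_prop)
  have hF'cont : Continuous (fun z : ℝ => F' (x, y) z) := by
    simp only [hF']
    have hfd : ∀ u : ℝ × ℝ, fderiv ℝ (⇑w) u = (SchwartzMap.fderivCLM ℝ (ℝ × ℝ) ℂ w) u := fun u =>
      (SchwartzMap.fderivCLM_apply ℝ w u).symm
    simp only [hfd]
    apply Continuous.add
    · apply Continuous.fun_smul
      · exact Complex.continuous_exp.comp (by fun_prop)
      · exact Continuous.clm_comp
          ((SchwartzMap.fderivCLM ℝ (ℝ × ℝ) ℂ w).continuous.comp (by fun_prop)) continuous_const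
    · apply Continuous.fun_smul
      · exact w.continuous.comp (by fun_prop)
      · apply Continuous.fun_smul
        · exact Complex.continuous_exp.comp (by fun_prop)
        · exact Continuous.fun_smul (by fun_prop) continuous_const
  -- pointwise differentiability
  have hDiff : ∀ (z : ℝ) (v : ℝ × ℝ), HasFDerivAt (fun v' => F v' z) (F' v z) v := by
    intro z v
    have hR' : HasFDerivAt (fun v' : ℝ × ℝ => ((v'.2 : ℝ) : ℂ)) R v := R.hasFDerivAt
    have hl : HasFDerivAt (fun v' : ℝ × ℝ => -(Complex.I * z * v'.2))
        ((-(Complex.I * z)) • R) v := by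
      have := hR'.const_mul (-(Complex.I * z))
      simpa [neg_mul, mul_assoc] using this
    have he : HasFDerivAt (fun v' : ℝ × ℝ => Complex.exp (-(Complex.I * z * v'.2)))
        (Complex.exp (-(Complex.I * z * v.2)) • ((-(Complex.I * z)) • R)) v := hl.cexp
    have hAff : HasFDerivAt (fun v' : ℝ × ℝ => ((v'.1 + (1-p)*z, v'.1 - p*z) : ℝ × ℝ)) A v := by
      have h0 := (A.hasFDerivAt (x := v)).add_const (((1-p)*z, -(p*z)) : ℝ × ℝ)
      have heq : (fun v' : ℝ × ℝ => A v' + (((1-p)*z, -(p*z)) : ℝ × ℝ))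
          = fun v' : ℝ × ℝ => ((v'.1 + (1-p)*z, v'.1 - p*z) : ℝ × ℝ) := by
        funext v'
        simp only [hA, ContinuousLinearMap.prod_apply, ContinuousLinearMap.coe_fst',
          Prod.mk_add_mk, sub_eq_add_neg]
      rw [heq] at h0
      exact h0
    have hw : HasFDerivAt (⇑w) (fderiv ℝ (⇑w) (v.1 + (1-p)*z, v.1 - p*z))
        (v.1 + (1-p)*z, v.1 - p*z) := w.differentiableAt.hasFDerivAt
    exact he.mul (hw.comp v hAff)
  -- integrabilities
  have hFint : Integrable (F (x, y)) volume := by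
    refine Integrable.mono' (g := fun z : ℝ => (16 * ((0:ℝ) + Cw)) * (1 + z^2)⁻¹)
      (integrable_inv_one_add_sq.const_mul _) (hFmeas _) ?_
    refine Filter.Eventually.of_forall fun z => ?_
    have hnorm : ‖F (x, y) z‖ = ‖w (x + (1-p)*z, x - p*z)‖ := by
      simp only [hF]; rw [norm_mul, hexp, one_mul]
    rw [hnorm]
    have := aux_bound |z| 0 (‖w (x + (1-p)*z, x - p*z)‖) 0 Cw (abs_nonneg z) le_rfl
      (norm_nonneg _) (by simp) (hCw x z p)
    simpa [_root_.sq_abs] using this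
  have hFzint : Integrable (fun z : ℝ => (z : ℂ) * F (x, y) z) volume := by
    refine Integrable.mono' (g := fun z : ℝ => (16 * (Cw + (0:ℝ))) * (1 + z^2)⁻¹)
      (integrable_inv_one_add_sq.const_mul _)
      (by
        apply Continuous.aestronglyMeasurable
        exact Continuous.mul (by fun_prop) (by
          apply Continuous.mul
          · exact Complex.continuous_exp.comp (by fun_prop)
          · exact w.continuous.comp (by fun_prop))) ?_
    refine Filter.Eventually.of_forall fun z => ?_
    have hnorm : ‖(z : ℂ) * F (x, y) z‖ = ‖w (x + (1-p)*z, x - p*z)‖ * |z| := by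
      simp only [hF]; rw [norm_mul, norm_mul, hexp, one_mul, Complex.norm_real,
        Real.norm_eq_abs, mul_comm]
    rw [hnorm]
    have := aux_bound |z| (‖w (x + (1-p)*z, x - p*z)‖) 0 Cw 0 (abs_nonneg z)
      (norm_nonneg _) le_rfl (hCw x z p) (by simp)
    simpa [_root_.sq_abs] using this
  have hF'int : Integrable (fun z : ℝ => F' (x, y) z) volume := by
    refine Integrable.mono' (g := fun z : ℝ => (16 * (Cw + Dw)) * (1 + z^2)⁻¹)
      (integrable_inv_one_add_sq.const_mul _) hF'cont.aestronglyMeasurable ?_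
    exact Filter.Eventually.of_forall fun z => hF'bound (x, y) z
  -- differentiation under the integral
  have hKey : HasFDerivAt (fun v => ∫ z : ℝ, F v z) (∫ z : ℝ, F' (x, y) z) (x, y) := by
    apply hasFDerivAt_integral_of_dominated_of_fderiv_le (s := Metric.ball (x, y) 1)
      (bound := fun z : ℝ => (16 * (Cw + Dw)) * (1 + z^2)⁻¹) (Metric.ball_mem_nhds _ one_pos)
      (Filter.Eventually.of_forall fun v => hFmeas v) hFint hF'cont.aestronglyMeasurable
      (Filter.Eventually.of_forall fun z v _ => hF'bound v z)
      (integrable_inv_one_add_sq.const_mul _)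
      (Filter.Eventually.of_forall fun z v _ => hDiff z v)
  have hWig : HasFDerivAt (Wig p ⇑w) (c • (∫ z : ℝ, F' (x, y) z)) (x, y) := by
    have hwe : (Wig p ⇑w) = fun v => c * ∫ z : ℝ, F v z := rfl
    rw [hwe]
    exact hKey.const_mul c
  have hfder : fderiv ℝ (Wig p ⇑w) (x, y) (0, 1)
      = c * ∫ z : ℝ, F' (x, y) z (0, 1) := by
    rw [hWig.fderiv]
    rw [ContinuousLinearMap.coe_smul', Pi.smul_apply, smul_eq_mul]
    congr 1
    exact ContinuousLinearMap.integral_apply hF'int (0, 1)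
  have hF'eval : (fun z : ℝ => F' (x, y) z ((0 : ℝ), (1 : ℝ)))
      = fun z : ℝ => -Complex.I * ((z : ℂ) * F (x, y) z) := by
    funext z
    simp only [hF', hF, hA, hR, ContinuousLinearMap.add_apply, ContinuousLinearMap.smul_apply,
      ContinuousLinearMap.coe_comp', Function.comp_apply, ContinuousLinearMap.prod_apply,
      ContinuousLinearMap.coe_fst', ContinuousLinearMap.coe_snd', Complex.ofRealCLM_apply,
      smul_eq_mul]
    norm_num [Prod.mk_zero_zero]
    ring
  -- final computation
  have hI1 : (∫ z : ℝ, F' (x, y) z (0, 1))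
      = -Complex.I * ∫ z : ℝ, (z : ℂ) * F (x, y) z := by
    rw [hF'eval, integral_const_mul]
  have hLHS : Wig p (fun v : ℝ × ℝ => (v.1 : ℂ) * w v) (x, y)
      = c * ((x : ℂ) * (∫ z : ℝ, F (x, y) z)
        + ((1 : ℂ) - p) * ∫ z : ℝ, (z : ℂ) * F (x, y) z) := by
    have hwe : Wig p (fun v : ℝ × ℝ => (v.1 : ℂ) * w v) (x, y)
        = c * ∫ z : ℝ, Complex.exp (-(Complex.I * z * y)) *
            (((x + (1-p)*z : ℝ) : ℂ) * w (x + (1-p)*z, x - p*z)) := rfl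
    rw [hwe]
    congr 1
    have hpt : (fun z : ℝ => Complex.exp (-(Complex.I * z * y)) *
          (((x + (1-p)*z : ℝ) : ℂ) * w (x + (1-p)*z, x - p*z)))
        = fun z : ℝ => (x : ℂ) * F (x, y) z + ((1 : ℂ) - p) * ((z : ℂ) * F (x, y) z) := by
      funext z
      simp only [hF]
      push_cast
      ring
    rw [hpt, integral_add (hFint.const_mul _) (hFzint.const_mul _),
      integral_const_mul, integral_const_mul]
  have hWigw : Wig p ⇑w (x, y) = c * ∫ z : ℝ, F (x, y) z := rfl
  rw [hLHS, hfder, hI1, hWigw]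
  push_cast
  set J0 := ∫ z : ℝ, F (x, y) z
  set J1 := ∫ z : ℝ, (z : ℂ) * F (x, y) z
  linear_combination (((1:ℂ) - (p:ℂ)) * c * J1) * Complex.I_sq

end
end
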